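/- arXiv:2208.01581 — 4 statements merged into one kernel-verified Lean document; each statement's English description precedes it below -/
import Mathlib

section
/- For any k, l ∈ ℤ³ ∖ {0} and any real coefficient vectors φ = (φ_p)_{p∈L_k} and ψ = (ψ_q)_{q∈L_l}, the generalized excitation operators satisfy [b_k(φ), b_l(ψ)] = 0, [b_k*(φ), b_l*(ψ)] = 0, and [b_k(φ), b_l*(ψ)] = δ_{k,l} (Σ_{p∈L_k} φ_p ψ_p) · 1 + ε_{k,l}(φ; ψ), where the exchange correction is the operator ε_{k,l}(φ; ψ) = − Σ_{p∈L_k} Σ_{q∈L_l} φ_p ψ_q ( δ_{p,q} c_{q−l} c_{p−k}* + δ_{p−k,q−l} c_q* c_p ). -/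
noncomputable section

open ContinuousLinearMap

lemma key_comm {R : Type*} [Ring R] (A B C D δ1 δ2 : R)
    (hBC : B * C = δ1 - C * B) (hDA : D * A = δ2 - A * D)
    (hCA : C * A = -(A * C)) (hDB : D * B = -(B * D))
    (hA1 : A * δ1 = δ1 * A) (hC2 : C * δ2 = δ2 * C) :
    (A * B) * (C * D) - (C * D) * (A * B) = δ1 * (A * D) - δ2 * (C * B) := by
  have L : (A * B) * (C * D) = δ1 * (A * D) - A * C * (B * D) := by
    have h : (A * B) * (C * D) = A * (B * C) * D := by noncomm_ring
    rw [h, hBC, mul_sub, sub_mul, hA1]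
    noncomm_ring
  have Rr : (C * D) * (A * B) = δ2 * (C * B) - A * C * (B * D) := by
    have h : (C * D) * (A * B) = C * (D * A) * B := by noncomm_ring
    have h2 : C * (A * D) * B = A * C * (B * D) := by
      have h3 : C * (A * D) * B = (C * A) * (D * B) := by noncomm_ring
      rw [h3, hCA, hDB]; noncomm_ring
    rw [h, hDA, mul_sub, sub_mul, hC2, h2]
    noncomm_ring
  rw [L, Rr]; noncomm_ring

lemma comm_sum_expand {R : Type*} [Ring R] {ι : Type*} (s t : Finset ι) (f g : ι → R) :
    (∑ p ∈ s, f p) * (∑ q ∈ t, g q) - (∑ q ∈ t, g q) * (∑ p ∈ s, f p)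
      = ∑ p ∈ s, ∑ q ∈ t, (f p * g q - g q * f p) := by
  rw [Finset.sum_mul_sum, Finset.sum_mul_sum, Finset.sum_comm (s := t) (t := s)]
  rw [← Finset.sum_sub_distrib]
  exact Finset.sum_congr rfl fun p _ => (Finset.sum_sub_distrib ..).symm

lemma smul_comm_helper {R : Type*} [Ring R] [Module ℂ R] [SMulCommClass ℂ R R]
    [IsScalarTower ℂ R R] (x y : ℝ) (F G : R) :
    ((x : ℂ) • F) * ((y : ℂ) • G) - ((y : ℂ) • G) * ((x : ℂ) • F)
      = ((x * y : ℝ) : ℂ) • (F * G - G * F) := by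
  push_cast
  rw [smul_mul_assoc, smul_mul_assoc, mul_smul_comm, mul_smul_comm, smul_smul, smul_smul,
    mul_comm (y : ℂ) (x : ℂ), smul_sub]

/-- squared Euclidean norm of a point of `ℤ³` -/
def normSq (p : Fin 3 → ℤ) : ℤ := ∑ i, (p i) ^ 2

/-- membership in the lune `L_k = {p : |p - k| ≤ k_F < |p|}` -/
def inLune (kF : ℝ) (k p : Fin 3 → ℤ) : Prop :=
  ((normSq (p - k) : ℝ)) ≤ kF ^ 2 ∧ kF ^ 2 < (normSq p : ℝ)

variable {H : Type*} [NormedAddCommGroup H] [InnerProductSpace ℂ H] [CompleteSpace H]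

/-- the generalized excitation (annihilation) operator `b_k(φ) = Σ_{p∈L_k} φ_p c_{p-k}* c_p` -/
def bOp (c : (Fin 3 → ℤ) → H →L[ℂ] H) (k : Fin 3 → ℤ) (Lk : Finset (Fin 3 → ℤ))
    (φ : (Fin 3 → ℤ) → ℝ) : H →L[ℂ] H :=
  ∑ p ∈ Lk, (φ p : ℂ) • (adjoint (c (p - k)) * c p)

/-- the generalized excitation (creation) operator `b_k*(φ) = Σ_{p∈L_k} φ_p c_p* c_{p-k}` -/
def bOpStar (c : (Fin 3 → ℤ) → H →L[ℂ] H) (k : Fin 3 → ℤ) (Lk : Finset (Fin 3 → ℤ))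
    (φ : (Fin 3 → ℤ) → ℝ) : H →L[ℂ] H :=
  ∑ p ∈ Lk, (φ p : ℂ) • (adjoint (c p) * c (p - k))

/-- the exchange correction
`ε_{k,l}(φ;ψ) = - Σ_{p∈L_k} Σ_{q∈L_l} φ_p ψ_q (δ_{p,q} c_{q-l} c_{p-k}* + δ_{p-k,q-l} c_q* c_p)` -/
def excorr (c : (Fin 3 → ℤ) → H →L[ℂ] H) (k l : Fin 3 → ℤ)
    (Lk Ll : Finset (Fin 3 → ℤ)) (φ ψ : (Fin 3 → ℤ) → ℝ) : H →L[ℂ] H :=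
  - ∑ p ∈ Lk, ∑ q ∈ Ll, ((φ p * ψ q : ℝ) : ℂ) •
      ((if p = q then c (q - l) * adjoint (c (p - k)) else 0)
        + (if p - k = q - l then adjoint (c q) * c p else 0))

/-- quasi-bosonic commutation relations of the generalized excitation operators. -/
theorem quasi_bosonic_commutation_relations
    (c : (Fin 3 → ℤ) → H →L[ℂ] H)
    (hCAR1 : ∀ p q, c p * c q + c q * c p = 0)
    (hCAR2 : ∀ p q, c p * adjoint (c q) + adjoint (c q) * c p
        = if p = q then (1 : H →L[ℂ] H) else 0)
    (kF : ℝ) (hkF : 0 < kF)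
    (k l : Fin 3 → ℤ) (hk : k ≠ 0) (hl : l ≠ 0)
    (Lk Ll : Finset (Fin 3 → ℤ))
    (hLk : ∀ p, p ∈ Lk ↔ inLune kF k p) (hLl : ∀ p, p ∈ Ll ↔ inLune kF l p)
    (φ ψ : (Fin 3 → ℤ) → ℝ) :
    bOp c k Lk φ * bOp c l Ll ψ - bOp c l Ll ψ * bOp c k Lk φ = 0 ∧
    bOpStar c k Lk φ * bOpStar c l Ll ψ - bOpStar c l Ll ψ * bOpStar c k Lk φ = 0 ∧
    bOp c k Lk φ * bOpStar c l Ll ψ - bOpStar c l Ll ψ * bOp c k Lk φ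
      = (if k = l then ((∑ p ∈ Lk, φ p * ψ p : ℝ) : ℂ) • (1 : H →L[ℂ] H) else 0)
        + excorr c k l Lk Ll φ ψ := by
  -- basic (anti)commutation consequences
  have hcc : ∀ p q, c p * c q = -(c q * c p) := fun p q =>
    eq_neg_of_add_eq_zero_left (hCAR1 p q)
  have hdd : ∀ p q, adjoint (c p) * adjoint (c q) = -(adjoint (c q) * adjoint (c p)) := by
    intro p q
    have h := congrArg (star : (H →L[ℂ] H) → (H →L[ℂ] H)) (hCAR1 q p)
    simp only [star_add, star_mul, star_zero, ContinuousLinearMap.star_eq_adjoint] at h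
    exact eq_neg_of_add_eq_zero_left h
  have hcd : ∀ p q, c p * adjoint (c q)
      = (if p = q then (1 : H →L[ℂ] H) else 0) - adjoint (c q) * c p := fun p q =>
    eq_sub_of_add_eq (hCAR2 p q)
  have hdc : ∀ p q, adjoint (c p) * c q
      = (if p = q then (1 : H →L[ℂ] H) else 0) - c q * adjoint (c p) := by
    intro p q
    have h := hCAR2 q p
    rw [add_comm] at h
    have h' := eq_sub_of_add_eq h
    simpa [eq_comm] using h'
  -- lune separation facts
  have hne1 : ∀ p ∈ Lk, ∀ q ∈ Ll, p ≠ q - l := by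
    intro p hp q hq h
    have h1 := ((hLk p).1 hp).2
    have h2 := ((hLl q).1 hq).1
    rw [h] at h1; linarith
  have hne2 : ∀ p ∈ Lk, ∀ q ∈ Ll, p - k ≠ q := by
    intro p hp q hq h
    have h1 := ((hLk p).1 hp).1
    have h2 := ((hLl q).1 hq).2
    rw [h] at h1; linarith
  refine ⟨?_, ?_, ?_⟩
  · -- [b, b] = 0
    unfold bOp
    rw [comm_sum_expand]
    apply Finset.sum_eq_zero; intro p hp
    apply Finset.sum_eq_zero; intro q hq
    rw [smul_comm_helper]
    have h1 : c p * adjoint (c (q - l)) = (0 : H →L[ℂ] H) - adjoint (c (q - l)) * c p := by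
      rw [hcd, if_neg (hne1 p hp q hq)]
    have h2 : c q * adjoint (c (p - k)) = (0 : H →L[ℂ] H) - adjoint (c (p - k)) * c q := by
      rw [hcd, if_neg (Ne.symm (hne2 p hp q hq))]
    rw [key_comm _ _ _ _ _ _ h1 h2 (hdd _ _) (hcc q p) (by simp) (by simp)]
    simp
  · -- [b*, b*] = 0
    unfold bOpStar
    rw [comm_sum_expand]
    apply Finset.sum_eq_zero; intro p hp
    apply Finset.sum_eq_zero; intro q hq
    rw [smul_comm_helper]
    have h1 : c (p - k) * adjoint (c q) = (0 : H →L[ℂ] H) - adjoint (c q) * c (p - k) := by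
      rw [hcd, if_neg (hne2 p hp q hq)]
    have h2 : c (q - l) * adjoint (c p) = (0 : H →L[ℂ] H) - adjoint (c p) * c (q - l) := by
      rw [hcd, if_neg (Ne.symm (hne1 p hp q hq))]
    rw [key_comm _ _ _ _ _ _ h1 h2 (hdd _ _) (hcc _ _) (by simp) (by simp)]
    simp
  · -- [b, b*]
    unfold bOp bOpStar
    rw [comm_sum_expand]
    have step : ∀ p ∈ Lk, ∀ q ∈ Ll,
        ((φ p : ℂ) • (adjoint (c (p - k)) * c p)) * ((ψ q : ℂ) • (adjoint (c q) * c (q - l)))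
          - ((ψ q : ℂ) • (adjoint (c q) * c (q - l)))
            * ((φ p : ℂ) • (adjoint (c (p - k)) * c p))
        = ((φ p * ψ q : ℝ) : ℂ) • (if p = q ∧ k = l then (1 : H →L[ℂ] H) else 0)
          - ((φ p * ψ q : ℝ) : ℂ) •
            ((if p = q then c (q - l) * adjoint (c (p - k)) else 0)
              + (if p - k = q - l then adjoint (c q) * c p else 0)) := by
      intro p _ q _
      rw [smul_comm_helper]
      rw [key_comm _ _ _ _ _ _ (hcd p q) (hcd (q - l) (p - k)) (hdd _ _) (hcc _ _)
        (by split_ifs <;> simp) (by split_ifs <;> simp)]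
      rw [← smul_sub]
      congr 1
      by_cases hpq : p = q
      · by_cases hkl : p - k = q - l
        · have hkl' : k = l := sub_right_inj.mp (hpq ▸ hkl)
          simp only [if_pos hpq, if_pos hkl, if_pos hkl.symm,
            if_pos (show p = q ∧ k = l from ⟨hpq, hkl'⟩), one_mul]
          rw [hdc (p - k) (q - l), if_pos hkl]
          noncomm_ring
        · have hkl' : ¬ k = l := fun h => hkl (by rw [hpq, h])
          simp only [if_pos hpq, if_neg hkl,
            if_neg (show ¬ q - l = p - k from fun h => hkl h.symm),
            if_neg (show ¬(p = q ∧ k = l) from fun h => hkl' h.2), one_mul, zero_mul]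
          rw [hdc (p - k) (q - l), if_neg hkl]
          noncomm_ring
      · by_cases hkl : p - k = q - l
        · simp only [if_neg hpq, if_pos hkl, if_pos hkl.symm,
            if_neg (show ¬(p = q ∧ k = l) from fun h => hpq h.1), zero_mul, one_mul]
          noncomm_ring
        · simp only [if_neg hpq, if_neg hkl,
            if_neg (show ¬ q - l = p - k from fun h => hkl h.symm),
            if_neg (show ¬(p = q ∧ k = l) from fun h => hpq h.1), zero_mul]
          noncomm_ring
    rw [Finset.sum_congr rfl fun p hp => Finset.sum_congr rfl fun q hq => step p hp q hq]
    simp only [Finset.sum_sub_distrib]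
    unfold excorr
    rw [sub_eq_add_neg]
    congr 1
    -- the diagonal part
    by_cases hkl : k = l
    · subst hkl
      have hLL : Lk = Ll := Finset.ext fun p => by rw [hLk p, hLl p]
      rw [if_pos rfl]
      subst hLL
      have inner : ∀ p ∈ Lk, (∑ q ∈ Lk, ((φ p * ψ q : ℝ) : ℂ) •
          (if p = q ∧ k = k then (1 : H →L[ℂ] H) else 0))
          = ((φ p * ψ p : ℝ) : ℂ) • (1 : H →L[ℂ] H) := by
        intro p hp
        have : ∀ q, ((φ p * ψ q : ℝ) : ℂ) • (if p = q ∧ k = k then (1 : H →L[ℂ] H) else 0)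
            = if p = q then ((φ p * ψ q : ℝ) : ℂ) • (1 : H →L[ℂ] H) else 0 := by
          intro q; by_cases h : p = q <;> simp [h]
        rw [Finset.sum_congr rfl fun q _ => this q, Finset.sum_ite_eq Lk p
          (fun q => ((φ p * ψ q : ℝ) : ℂ) • (1 : H →L[ℂ] H)), if_pos hp]
      rw [Finset.sum_congr rfl inner, ← Finset.sum_smul]
      norm_cast
    · rw [if_neg hkl]
      apply Finset.sum_eq_zero; intro p _
      apply Finset.sum_eq_zero; intro q _
      rw [if_neg (by simp [hkl]), smul_zero]

end
end

section
/- Let A : ℤ³ × ℤ³ × ℤ³ → ℂ be finitely supported with A(p,q,r) = 0 unless p ∈ B_F^c and q, r ∈ B_F. Let Ψ ∈ H be such that the family (‖c_p Ψ‖²)_{p ∈ B_F^c} is summable and Σ_{p∈B_F^c} ‖c_p Ψ‖² = Σ_{q∈B_F} ‖c_q* Ψ‖² (as holds for vectors in the N-particle space with N = |B_F|); denote this common value by ⟨Ψ, 𝒩_E Ψ⟩. Then ‖ Σ_{p∈B_F^c} Σ_{q,r∈B_F} A(p,q,r) c_p* c_q c_r Ψ ‖² ≤ 5 ( Σ_{p∈B_F^c}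 Σ_{q,r∈B_F} |A(p,q,r)|² ) ( ⟨Ψ, 𝒩_E Ψ⟩ + ‖Ψ‖² ). -/
set_option linter.unusedSectionVars false
set_option linter.unusedVariables false
set_option maxHeartbeats 4000000

noncomputable section

open ContinuousLinearMap Finset
open scoped ComplexConjugate

namespace HOFEaux

abbrev V := Fin 3 → ℤ

variable {H : Type*} [NormedAddCommGroup H] [InnerProductSpace ℂ H] [CompleteSpace H]

local notation "⟪" x ", " y "⟫" => @inner ℂ _ _ x y

section CAR
variable (c : V → H →L[ℂ] H)

lemma vcar1 (h1 : ∀ p q, c p * c q + c q * c p = 0) (p q : V) (ξ : H) :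
    c p (c q ξ) = - c q (c p ξ) := by
  have := congrArg (fun T : H →L[ℂ] H => T ξ) (h1 p q)
  simp only [ContinuousLinearMap.add_apply, ContinuousLinearMap.mul_apply,
    ContinuousLinearMap.zero_apply] at this
  linear_combination (norm := abel) this

lemma dmove (h2 : ∀ p q, c p * adjoint (c q) + adjoint (c q) * c p
      = if p = q then (1 : H →L[ℂ] H) else 0) (a b : V) (ζ : H) :
    adjoint (c a) (c b ζ) = (if b = a then ζ else 0) - c b (adjoint (c a) ζ) := by
  have := congrArg (fun T : H →L[ℂ] H => T ζ) (h2 b a)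
  simp only [ContinuousLinearMap.add_apply, ContinuousLinearMap.mul_apply] at this
  by_cases h : b = a <;> simp [h] at this ⊢ <;> linear_combination (norm := abel) this

lemma pair_inner (h2 : ∀ p q, c p * adjoint (c q) + adjoint (c q) * c p
      = if p = q then (1 : H →L[ℂ] H) else 0) (a b : V) (η ζ : H) :
    ⟪c a η, c b ζ⟫ = (if b = a then (1:ℂ) else 0) * ⟪η, ζ⟫
      - ⟪adjoint (c b) η, adjoint (c a) ζ⟫ := by
  have h0 : ⟪c a η, c b ζ⟫ = ⟪η, adjoint (c a) (c b ζ)⟫ :=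
    (ContinuousLinearMap.adjoint_inner_right (c a) _ _).symm
  rw [h0, dmove c h2, inner_sub_right, apply_ite (fun w => (⟪η, w⟫ : ℂ)), inner_zero_right,
    ← ContinuousLinearMap.adjoint_inner_left (c b)]
  split <;> simp


/-- the 7-term CAR expansion of a two-pair inner product -/
lemma star_id (h2 : ∀ p q, c p * adjoint (c q) + adjoint (c q) * c p
      = if p = q then (1 : H →L[ℂ] H) else 0) (q' r' q r : V) (η ξ : H) :
    ⟪c q' (c r' η), c q (c r ξ)⟫ =
      (if q = q' then (1:ℂ) else 0) * (if r = r' then (1:ℂ) else 0) * ⟪η, ξ⟫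
    - (if r = q' then (1:ℂ) else 0) * (if q = r' then (1:ℂ) else 0) * ⟪η, ξ⟫
    - (if q = q' then (1:ℂ) else 0) * ⟪adjoint (c r) η, adjoint (c r') ξ⟫
    + (if r = q' then (1:ℂ) else 0) * ⟪adjoint (c q) η, adjoint (c r') ξ⟫
    + (if q = r' then (1:ℂ) else 0) * ⟪adjoint (c r) η, adjoint (c q') ξ⟫
    - (if r = r' then (1:ℂ) else 0) * ⟪adjoint (c q) η, adjoint (c q') ξ⟫
    + ⟪adjoint (c r) (adjoint (c q) η), adjoint (c r') (adjoint (c q') ξ)⟫ := by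
  have h0 : ⟪c q' (c r' η), c q (c r ξ)⟫ = ⟪c r' η, adjoint (c q') (c q (c r ξ))⟫ :=
    (ContinuousLinearMap.adjoint_inner_right (c q') _ _).symm
  have e1 : ⟪c r' η, c r ξ⟫ = (if r = r' then (1:ℂ) else 0) * ⟪η, ξ⟫
      - ⟪adjoint (c r) η, adjoint (c r') ξ⟫ := pair_inner c h2 r' r η ξ
  have e3 : ⟪c r' η, c q ξ⟫ = (if q = r' then (1:ℂ) else 0) * ⟪η, ξ⟫
      - ⟪adjoint (c q) η, adjoint (c r') ξ⟫ := pair_inner c h2 r' q η ξ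
  have e4 : ⟪c r' η, c q (c r (adjoint (c q') ξ))⟫
      = (if q = r' then (1:ℂ) else 0) * ⟪adjoint (c r) η, adjoint (c q') ξ⟫
        - (if r = r' then (1:ℂ) else 0) * ⟪adjoint (c q) η, adjoint (c q') ξ⟫
        + ⟪adjoint (c r) (adjoint (c q) η), adjoint (c r') (adjoint (c q') ξ)⟫ := by
    rw [pair_inner c h2 r' q η (c r (adjoint (c q') ξ)),
      ← ContinuousLinearMap.adjoint_inner_left (c r) ((adjoint (c q')) ξ) η,
      dmove c h2 r' r, inner_sub_right, apply_ite (fun w => (⟪adjoint (c q) η, w⟫ : ℂ)),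
      inner_zero_right,
      ← ContinuousLinearMap.adjoint_inner_left (c r) _ ((adjoint (c q)) η)]
    split_ifs <;> ring
  rw [h0, dmove c h2, inner_sub_right, apply_ite (fun w => (⟪c r' η, w⟫ : ℂ)),
    inner_zero_right, e1, dmove c h2 q' r, (c q).map_sub, inner_sub_right,
    apply_ite (fun w => c q w), (c q).map_zero, apply_ite (fun w => (⟪c r' η, w⟫ : ℂ)),
    inner_zero_right, e3, e4]
  split_ifs <;> ring


end CAR

lemma adjoint_smul' (a : ℂ) (T : H →L[ℂ] H) :
    adjoint (a • T) = (starRingEnd ℂ a) • adjoint T := by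
  rw [← ContinuousLinearMap.star_eq_adjoint, ← ContinuousLinearMap.star_eq_adjoint, star_smul]
  rfl

lemma adjoint_sum' (s : Finset V) (f : V → H →L[ℂ] H) :
    adjoint (∑ p ∈ s, f p) = ∑ p ∈ s, adjoint (f p) := by
  classical
  induction s using Finset.induction_on with
  | empty => simp [← ContinuousLinearMap.star_eq_adjoint]
  | insert _ _ h ih => rw [Finset.sum_insert h, Finset.sum_insert h, ← ih, map_add]

/-- fermionic linear-combination bound -/
lemma lin (e : V → H →L[ℂ] H)
    (he : ∀ p q, e p * adjoint (e q) + adjoint (e q) * e p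
      = if p = q then (1 : H →L[ℂ] H) else 0)
    (s : Finset V) (lam : V → ℂ) (ξ : H) :
    ‖∑ p ∈ s, lam p • e p ξ‖ ^ 2 ≤ (∑ p ∈ s, ‖lam p‖ ^ 2) * ‖ξ‖ ^ 2 := by
  classical
  set b : H →L[ℂ] H := ∑ p ∈ s, lam p • e p with hb
  have hbx : (∑ p ∈ s, lam p • e p ξ) = b ξ := by
    simp [hb, ContinuousLinearMap.sum_apply]
  have hadj : adjoint b = ∑ p ∈ s, (starRingEnd ℂ (lam p)) • adjoint (e p) := by
    rw [hb, adjoint_sum']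
    exact Finset.sum_congr rfl fun p _ => adjoint_smul' _ _
  have key : adjoint b * b + b * adjoint b
      = (∑ p ∈ s, (‖lam p‖ ^ 2 : ℂ)) • (1 : H →L[ℂ] H) := by
    rw [hb, hadj, Finset.sum_mul_sum, Finset.sum_mul_sum]
    rw [Finset.sum_comm (s := s) (t := s)
      (f := fun q p => (lam q • e q) * ((starRingEnd ℂ (lam p)) • adjoint (e p)))]
    rw [← Finset.sum_add_distrib]
    have : ∀ q ∈ s, (∑ p ∈ s, ((starRingEnd ℂ (lam q)) • adjoint (e q)) * (lam p • e p))
        + (∑ p ∈ s, (lam p • e p) * ((starRingEnd ℂ (lam q)) • adjoint (e q)))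
        = (‖lam q‖ ^ 2 : ℂ) • (1 : H →L[ℂ] H) := by
      intro q hq
      rw [← Finset.sum_add_distrib]
      have hpt : ∀ p ∈ s, ((starRingEnd ℂ (lam q)) • adjoint (e q)) * (lam p • e p)
          + (lam p • e p) * ((starRingEnd ℂ (lam q)) • adjoint (e q))
          = if p = q then (lam p * starRingEnd ℂ (lam q)) • (1 : H →L[ℂ] H) else 0 := by
        intro p _
        rw [smul_mul_smul_comm, smul_mul_smul_comm, mul_comm (starRingEnd ℂ (lam q)) (lam p),
          ← smul_add, add_comm, he p q]
        split <;> simp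
      rw [Finset.sum_congr rfl hpt, Finset.sum_ite_eq' s q
        (fun p => (lam p * starRingEnd ℂ (lam q)) • (1 : H →L[ℂ] H)), if_pos hq,
        Complex.mul_conj']
    rw [Finset.sum_congr rfl this, ← Finset.sum_smul]
  have hq1 : (⟪ξ, (adjoint b * b) ξ⟫ : ℂ) = ⟪b ξ, b ξ⟫ := by
    rw [ContinuousLinearMap.mul_apply]
    exact ContinuousLinearMap.adjoint_inner_right b ξ (b ξ)
  have hq2 : (⟪ξ, (b * adjoint b) ξ⟫ : ℂ) = ⟪adjoint b ξ, adjoint b ξ⟫ := by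
    rw [ContinuousLinearMap.mul_apply]
    exact (ContinuousLinearMap.adjoint_inner_left b (adjoint b ξ) ξ).symm
  have h2 : ‖b ξ‖ ^ 2 + ‖adjoint b ξ‖ ^ 2 = (∑ p ∈ s, ‖lam p‖ ^ 2) * ‖ξ‖ ^ 2 := by
    have := congrArg (fun T : H →L[ℂ] H => (⟪ξ, T ξ⟫ : ℂ)) key
    simp only [ContinuousLinearMap.add_apply, inner_add_right,
      ContinuousLinearMap.smul_apply, ContinuousLinearMap.one_apply,
      inner_smul_right] at this
    rw [hq1, hq2] at this
    simp only [inner_self_eq_norm_sq_to_K (𝕜 := ℂ)] at this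
    have : ((‖b ξ‖ ^ 2 + ‖adjoint b ξ‖ ^ 2 : ℝ) : ℂ)
        = (((∑ p ∈ s, ‖lam p‖ ^ 2) * ‖ξ‖ ^ 2 : ℝ) : ℂ) := by
      push_cast
      exact this
    exact_mod_cast this
  have h3 : 0 ≤ ‖adjoint b ξ‖ ^ 2 := sq_nonneg _
  rw [hbx]
  linarith
lemma two_stage {ι : Type*} (e : V → H →L[ℂ] H)
    (he : ∀ p q, e p * adjoint (e q) + adjoint (e q) * e p
      = if p = q then (1 : H →L[ℂ] H) else 0)
    (s : Finset ι) (t : Finset V) (B : ι → V → ℂ) (ξ : ι → H) :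
    ‖∑ i ∈ s, ∑ j ∈ t, B i j • e j (ξ i)‖ ^ 2
      ≤ (∑ i ∈ s, ∑ j ∈ t, ‖B i j‖ ^ 2) * (∑ i ∈ s, ‖ξ i‖ ^ 2) := by
  classical
  have h1 : ∀ i, ‖∑ j ∈ t, B i j • e j (ξ i)‖
      ≤ Real.sqrt (∑ j ∈ t, ‖B i j‖ ^ 2) * ‖ξ i‖ := by
    intro i
    have h0 := lin e he t (fun j => B i j) (ξ i)
    have hnn : (0:ℝ) ≤ Real.sqrt (∑ j ∈ t, ‖B i j‖ ^ 2) * ‖ξ i‖ :=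
      mul_nonneg (Real.sqrt_nonneg _) (norm_nonneg _)
    refine le_of_pow_le_pow_left₀ (n := 2) (by norm_num) hnn ?_
    rw [mul_pow, Real.sq_sqrt (by positivity)]
    exact h0
  calc ‖∑ i ∈ s, ∑ j ∈ t, B i j • e j (ξ i)‖ ^ 2
      ≤ (∑ i ∈ s, Real.sqrt (∑ j ∈ t, ‖B i j‖ ^ 2) * ‖ξ i‖) ^ 2 := by
        refine pow_le_pow_left₀ (norm_nonneg _) ?_ 2
        exact (norm_sum_le _ _).trans (Finset.sum_le_sum fun i _ => h1 i)
    _ ≤ (∑ i ∈ s, Real.sqrt (∑ j ∈ t, ‖B i j‖ ^ 2) ^ 2) * (∑ i ∈ s, ‖ξ i‖ ^ 2) :=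
        Finset.sum_mul_sq_le_sq_mul_sq s _ _
    _ = (∑ i ∈ s, ∑ j ∈ t, ‖B i j‖ ^ 2) * (∑ i ∈ s, ‖ξ i‖ ^ 2) := by
        congr 1
        exact Finset.sum_congr rfl fun i _ => Real.sq_sqrt (by positivity)

lemma abs_re_inner_le (u w : H) : |(⟪u, w⟫).re| ≤ (‖u‖ ^ 2 + ‖w‖ ^ 2) / 2 := by
  have h1 : |(⟪u, w⟫).re| ≤ ‖(⟪u, w⟫ : ℂ)‖ := Complex.abs_re_le_norm _
  have h2 : ‖(⟪u, w⟫ : ℂ)‖ ≤ ‖u‖ * ‖w‖ := norm_inner_le_norm _ _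
  nlinarith [sq_nonneg (‖u‖ - ‖w‖)]

-- generic sum helpers
lemma inner_sum2' {ι κ : Type*} (s : Finset ι) (t : Finset κ) (f : ι → ℂ) (g : κ → ℂ)
    (u : ι → H) (v : κ → H) :
    ⟪∑ i ∈ s, f i • u i, ∑ j ∈ t, g j • v j⟫
      = ∑ i ∈ s, ∑ j ∈ t, (starRingEnd ℂ) (f i) * g j * ⟪u i, v j⟫ := by
  rw [sum_inner]
  refine Finset.sum_congr rfl fun i _ => ?_
  rw [inner_smul_left, inner_sum, Finset.mul_sum]
  refine Finset.sum_congr rfl fun j _ => ?_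
  rw [inner_smul_right]; ring

lemma inner_sum4' {ι κ ι' κ' : Type*} (s : Finset ι) (t : Finset κ) (s' : Finset ι')
    (t' : Finset κ') (f : ι → κ → ℂ) (g : ι' → κ' → ℂ) (u : ι → κ → H) (v : ι' → κ' → H) :
    ⟪∑ i ∈ s, ∑ j ∈ t, f i j • u i j, ∑ k ∈ s', ∑ l ∈ t', g k l • v k l⟫
      = ∑ i ∈ s, ∑ j ∈ t, ∑ k ∈ s', ∑ l ∈ t',
          (starRingEnd ℂ) (f i j) * g k l * ⟪u i j, v k l⟫ := by
  rw [sum_inner]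
  refine Finset.sum_congr rfl fun i _ => ?_
  rw [sum_inner]
  refine Finset.sum_congr rfl fun j _ => ?_
  rw [inner_smul_left, inner_sum, Finset.mul_sum]
  refine Finset.sum_congr rfl fun k _ => ?_
  rw [inner_sum, Finset.mul_sum]
  refine Finset.sum_congr rfl fun l _ => ?_
  rw [inner_smul_right]; ring

lemma sum_swap4 {M : Type*} [AddCommMonoid M] {α : Type*} (s t u v : Finset α)
    (F : α → α → α → α → M) :
    (∑ a ∈ s, ∑ b ∈ t, ∑ x ∈ u, ∑ y ∈ v, F a b x y)
      = ∑ x ∈ u, ∑ y ∈ v, ∑ a ∈ s, ∑ b ∈ t, F a b x y := by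
  calc (∑ a ∈ s, ∑ b ∈ t, ∑ x ∈ u, ∑ y ∈ v, F a b x y)
      = ∑ a ∈ s, ∑ x ∈ u, ∑ b ∈ t, ∑ y ∈ v, F a b x y :=
        Finset.sum_congr rfl fun a _ => Finset.sum_comm
    _ = ∑ x ∈ u, ∑ a ∈ s, ∑ b ∈ t, ∑ y ∈ v, F a b x y := Finset.sum_comm
    _ = ∑ x ∈ u, ∑ a ∈ s, ∑ y ∈ v, ∑ b ∈ t, F a b x y :=
        Finset.sum_congr rfl fun x _ => Finset.sum_congr rfl fun a _ => Finset.sum_comm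
    _ = ∑ x ∈ u, ∑ y ∈ v, ∑ a ∈ s, ∑ b ∈ t, F a b x y :=
        Finset.sum_congr rfl fun x _ => Finset.sum_comm

lemma sum_ite_pull {M : Type*} [AddCommMonoid M] {α : Type*} (s : Finset α) (P : Prop)
    [Decidable P] (f : α → M) :
    (∑ x ∈ s, if P then f x else 0) = if P then ∑ x ∈ s, f x else 0 := by
  split <;> simp

variable {α : Type*} [DecidableEq α]

/-- collapse the double delta δ(q,q̄)δ(r,r̄) -/
lemma Lc1 (B : Finset α) (G X : α → α → α → α → ℂ) :
    (∑ a ∈ B, ∑ b ∈ B, ∑ q ∈ B, ∑ r ∈ B,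
        G a b q r * ((if q = a then (1:ℂ) else 0) * (if r = b then (1:ℂ) else 0) * X a b q r))
      = ∑ q ∈ B, ∑ r ∈ B, G q r q r * X q r q r := by
  have point : ∀ a b q r, G a b q r *
      ((if q = a then (1:ℂ) else 0) * (if r = b then (1:ℂ) else 0) * X a b q r)
      = if q = a then (if r = b then G a b q r * X a b q r else 0) else 0 := by
    intros; split_ifs <;> ring
  simp only [point]
  rw [sum_swap4]
  refine Finset.sum_congr rfl fun q hq => Finset.sum_congr rfl fun r hr => ?_
  rw [Finset.sum_congr rfl fun a (_ : a ∈ B) => sum_ite_pull B (q = a) _]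
  rw [Finset.sum_ite_eq B q fun a => ∑ b ∈ B, if r = b then G a b q r * X a b q r else 0,
    if_pos hq, Finset.sum_ite_eq B r fun b => G q b q r * X q b q r, if_pos hr]

/-- collapse the double delta δ(r,q̄)δ(q,r̄) -/
lemma Lc2 (B : Finset α) (G X : α → α → α → α → ℂ) :
    (∑ a ∈ B, ∑ b ∈ B, ∑ q ∈ B, ∑ r ∈ B,
        G a b q r * ((if r = a then (1:ℂ) else 0) * (if q = b then (1:ℂ) else 0) * X a b q r))
      = ∑ q ∈ B, ∑ r ∈ B, G r q q r * X r q q r := by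
  have point : ∀ a b q r, G a b q r *
      ((if r = a then (1:ℂ) else 0) * (if q = b then (1:ℂ) else 0) * X a b q r)
      = if r = a then (if q = b then G a b q r * X a b q r else 0) else 0 := by
    intros; split_ifs <;> ring
  simp only [point]
  rw [sum_swap4]
  refine Finset.sum_congr rfl fun q hq => Finset.sum_congr rfl fun r hr => ?_
  rw [Finset.sum_congr rfl fun a (_ : a ∈ B) => sum_ite_pull B (r = a) _]
  rw [Finset.sum_ite_eq B r fun a => ∑ b ∈ B, if q = b then G a b q r * X a b q r else 0,
    if_pos hr, Finset.sum_ite_eq B q fun b => G r b q r * X r b q r, if_pos hq]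

/-- collapse δ(q,q̄) -/
lemma Lc3 (B : Finset α) (G X : α → α → α → α → ℂ) :
    (∑ a ∈ B, ∑ b ∈ B, ∑ q ∈ B, ∑ r ∈ B,
        G a b q r * ((if q = a then (1:ℂ) else 0) * X a b q r))
      = ∑ q ∈ B, ∑ r ∈ B, ∑ b ∈ B, G q b q r * X q b q r := by
  have point : ∀ a b q r, G a b q r * ((if q = a then (1:ℂ) else 0) * X a b q r)
      = if q = a then G a b q r * X a b q r else 0 := by
    intros; split_ifs <;> ring
  simp only [point]
  rw [sum_swap4]
  refine Finset.sum_congr rfl fun q hq => Finset.sum_congr rfl fun r hr => ?_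
  rw [Finset.sum_congr rfl fun a (_ : a ∈ B) => sum_ite_pull B (q = a) _]
  rw [Finset.sum_ite_eq B q fun a => ∑ b ∈ B, G a b q r * X a b q r, if_pos hq]

/-- collapse δ(r,q̄) -/
lemma Lc4 (B : Finset α) (G X : α → α → α → α → ℂ) :
    (∑ a ∈ B, ∑ b ∈ B, ∑ q ∈ B, ∑ r ∈ B,
        G a b q r * ((if r = a then (1:ℂ) else 0) * X a b q r))
      = ∑ q ∈ B, ∑ r ∈ B, ∑ b ∈ B, G r b q r * X r b q r := by
  have point : ∀ a b q r, G a b q r * ((if r = a then (1:ℂ) else 0) * X a b q r)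
      = if r = a then G a b q r * X a b q r else 0 := by
    intros; split_ifs <;> ring
  simp only [point]
  rw [sum_swap4]
  refine Finset.sum_congr rfl fun q hq => Finset.sum_congr rfl fun r hr => ?_
  rw [Finset.sum_congr rfl fun a (_ : a ∈ B) => sum_ite_pull B (r = a) _]
  rw [Finset.sum_ite_eq B r fun a => ∑ b ∈ B, G a b q r * X a b q r, if_pos hr]

/-- collapse δ(q,r̄) -/
lemma Lc5 (B : Finset α) (G X : α → α → α → α → ℂ) :
    (∑ a ∈ B, ∑ b ∈ B, ∑ q ∈ B, ∑ r ∈ B,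
        G a b q r * ((if q = b then (1:ℂ) else 0) * X a b q r))
      = ∑ q ∈ B, ∑ r ∈ B, ∑ a ∈ B, G a q q r * X a q q r := by
  have point : ∀ a b q r, G a b q r * ((if q = b then (1:ℂ) else 0) * X a b q r)
      = if q = b then G a b q r * X a b q r else 0 := by
    intros; split_ifs <;> ring
  simp only [point]
  rw [sum_swap4]
  refine Finset.sum_congr rfl fun q hq => Finset.sum_congr rfl fun r hr => ?_
  refine (Finset.sum_congr rfl fun a (_ : a ∈ B) => ?_)
  rw [Finset.sum_ite_eq B q fun b => G a b q r * X a b q r, if_pos hq]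

/-- collapse δ(r,r̄) -/
lemma Lc6 (B : Finset α) (G X : α → α → α → α → ℂ) :
    (∑ a ∈ B, ∑ b ∈ B, ∑ q ∈ B, ∑ r ∈ B,
        G a b q r * ((if r = b then (1:ℂ) else 0) * X a b q r))
      = ∑ q ∈ B, ∑ r ∈ B, ∑ a ∈ B, G a r q r * X a r q r := by
  have point : ∀ a b q r, G a b q r * ((if r = b then (1:ℂ) else 0) * X a b q r)
      = if r = b then G a b q r * X a b q r else 0 := by
    intros; split_ifs <;> ring
  simp only [point]
  rw [sum_swap4]
  refine Finset.sum_congr rfl fun q hq => Finset.sum_congr rfl fun r hr => ?_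
  refine (Finset.sum_congr rfl fun a (_ : a ∈ B) => ?_)
  rw [Finset.sum_ite_eq B r fun b => G a b q r * X a b q r, if_pos hr]

/-- collapse a single delta in a double sum -/
lemma Lc0 {M : Type*} [AddCommMonoid M] (P : Finset α) (F : α → α → M) :
    (∑ a ∈ P, ∑ p ∈ P, if a = p then F a p else 0) = ∑ p ∈ P, F p p := by
  refine Finset.sum_congr rfl fun a ha => ?_
  rw [Finset.sum_ite_eq P a (F a), if_pos ha]

lemma pair_est1 {ι : Type*} (s : Finset ι) (u w : ι → H) :
    |(∑ i ∈ s, (inner ℂ (u i) (w i) : ℂ)).re|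
      ≤ ((∑ i ∈ s, ‖u i‖ ^ 2) + (∑ i ∈ s, ‖w i‖ ^ 2)) / 2 := by
  rw [Complex.re_sum]
  refine (Finset.abs_sum_le_sum_abs _ _).trans ?_
  calc (∑ i ∈ s, |(inner ℂ (u i) (w i) : ℂ).re|)
      ≤ ∑ i ∈ s, (‖u i‖ ^ 2 + ‖w i‖ ^ 2) / 2 :=
        Finset.sum_le_sum fun i _ => abs_re_inner_le (u i) (w i)
    _ = _ := by rw [← Finset.sum_div, Finset.sum_add_distrib]

lemma pair_est2 {ι κ : Type*} (s : Finset ι) (t : Finset κ) (u w : ι → κ → H) :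
    |(∑ i ∈ s, ∑ j ∈ t, (inner ℂ (u i j) (w i j) : ℂ)).re|
      ≤ ((∑ i ∈ s, ∑ j ∈ t, ‖u i j‖ ^ 2) + (∑ i ∈ s, ∑ j ∈ t, ‖w i j‖ ^ 2)) / 2 := by
  have := pair_est1 (s ×ˢ t) (fun x => u x.1 x.2) (fun x => w x.1 x.2)
  simpa [Finset.sum_product] using this

lemma pair_est3 {ι κ μ : Type*} (s : Finset ι) (t : Finset κ) (v : Finset μ)
    (u w : ι → κ → μ → H) :
    |(∑ i ∈ s, ∑ j ∈ t, ∑ k ∈ v, (inner ℂ (u i j k) (w i j k) : ℂ)).re|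
      ≤ ((∑ i ∈ s, ∑ j ∈ t, ∑ k ∈ v, ‖u i j k‖ ^ 2)
          + (∑ i ∈ s, ∑ j ∈ t, ∑ k ∈ v, ‖w i j k‖ ^ 2)) / 2 := by
  have := pair_est1 (s ×ˢ (t ×ˢ v)) (fun x => u x.1 x.2.1 x.2.2) (fun x => w x.1 x.2.1 x.2.2)
  simpa [Finset.sum_product] using this

lemma normsum_est1 {ι : Type*} (s : Finset ι) (u : ι → H) :
    (∑ i ∈ s, (inner ℂ (u i) (u i) : ℂ)).re = ∑ i ∈ s, ‖u i‖ ^ 2 := by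
  rw [Complex.re_sum]
  exact Finset.sum_congr rfl fun i _ => inner_self_eq_norm_sq (𝕜 := ℂ) (u i)

lemma normsum_est2 {ι κ : Type*} (s : Finset ι) (t : Finset κ) (u : ι → κ → H) :
    (∑ i ∈ s, ∑ j ∈ t, (inner ℂ (u i j) (u i j) : ℂ)).re = ∑ i ∈ s, ∑ j ∈ t, ‖u i j‖ ^ 2 := by
  have := normsum_est1 (s ×ˢ t) (fun x => u x.1 x.2)
  simpa [Finset.sum_product] using this

lemma normsum_est3 {ι κ μ : Type*} (s : Finset ι) (t : Finset κ) (v : Finset μ)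
    (u : ι → κ → μ → H) :
    (∑ i ∈ s, ∑ j ∈ t, ∑ k ∈ v, (inner ℂ (u i j k) (u i j k) : ℂ)).re
      = ∑ i ∈ s, ∑ j ∈ t, ∑ k ∈ v, ‖u i j k‖ ^ 2 := by
  have := normsum_est1 (s ×ˢ (t ×ˢ v)) (fun x => u x.1 x.2.1 x.2.2)
  simpa [Finset.sum_product] using this

section core
variable (c : V → H →L[ℂ] H) (A : V × V × V → ℂ) (B₀ : Finset V)

def vv (e : V) (ζ : H) : H := ∑ q ∈ B₀, ∑ r ∈ B₀, A (e,q,r) • c q (c r ζ)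
def gm (e q : V) (ζ : H) : H := ∑ r ∈ B₀, (starRingEnd ℂ) (A (e,q,r)) • adjoint (c r) ζ
def gmQ (e r : V) (ζ : H) : H := ∑ q ∈ B₀, (starRingEnd ℂ) (A (e,q,r)) • adjoint (c q) ζ
def gm2 (e r : V) (ζ : H) : H := ∑ s ∈ B₀, (starRingEnd ℂ) (A (e,r,s)) • adjoint (c s) ζ
def gm3 (e q : V) (ζ : H) : H := ∑ s ∈ B₀, (starRingEnd ℂ) (A (e,s,q)) • adjoint (c s) ζ
def DD (e : V) (ζ : H) : H :=
  ∑ q ∈ B₀, ∑ r ∈ B₀, (starRingEnd ℂ) (A (e,q,r)) • adjoint (c r) (adjoint (c q) ζ)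


lemma IDENT2 (h2 : ∀ p q, c p * adjoint (c q) + adjoint (c q) * c p
      = if p = q then (1 : H →L[ℂ] H) else 0) (a b : V) (η ξ : H) :
    ⟪vv c A B₀ a η, vv c A B₀ b ξ⟫ =
        (∑ q ∈ B₀, ∑ r ∈ B₀, (starRingEnd ℂ) (A (a,q,r)) * A (b,q,r)) * ⟪η, ξ⟫
      - (∑ q ∈ B₀, ∑ r ∈ B₀, (starRingEnd ℂ) (A (a,r,q)) * A (b,q,r)) * ⟪η, ξ⟫
      - (∑ q ∈ B₀, ⟪gm c A B₀ b q η, gm c A B₀ a q ξ⟫)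
      + (∑ r ∈ B₀, ⟪gmQ c A B₀ b r η, gm2 c A B₀ a r ξ⟫)
      + (∑ q ∈ B₀, ⟪gm c A B₀ b q η, gm3 c A B₀ a q ξ⟫)
      - (∑ r ∈ B₀, ⟪gmQ c A B₀ b r η, gmQ c A B₀ a r ξ⟫)
      + ⟪DD c A B₀ b η, DD c A B₀ a ξ⟫ := by
  have step1 : ⟪vv c A B₀ a η, vv c A B₀ b ξ⟫
      = ∑ x ∈ B₀, ∑ y ∈ B₀, ∑ q ∈ B₀, ∑ r ∈ B₀,
          (starRingEnd ℂ) (A (a,x,y)) * A (b,q,r) * ⟪c x (c y η), c q (c r ξ)⟫ := by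
    rw [vv, vv]
    exact inner_sum4' B₀ B₀ B₀ B₀ (fun i j => A (a,i,j)) (fun k l => A (b,k,l))
      (fun i j => c i (c j η)) (fun k l => c k (c l ξ))
  have step2 : ⟪vv c A B₀ a η, vv c A B₀ b ξ⟫
      = (∑ x ∈ B₀, ∑ y ∈ B₀, ∑ q ∈ B₀, ∑ r ∈ B₀,
          ((starRingEnd ℂ) (A (a,x,y)) * A (b,q,r)) *
            ((if q = x then (1:ℂ) else 0) * (if r = y then (1:ℂ) else 0) * ⟪η, ξ⟫))
      - (∑ x ∈ B₀, ∑ y ∈ B₀, ∑ q ∈ B₀, ∑ r ∈ B₀,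
          ((starRingEnd ℂ) (A (a,x,y)) * A (b,q,r)) *
            ((if r = x then (1:ℂ) else 0) * (if q = y then (1:ℂ) else 0) * ⟪η, ξ⟫))
      - (∑ x ∈ B₀, ∑ y ∈ B₀, ∑ q ∈ B₀, ∑ r ∈ B₀,
          ((starRingEnd ℂ) (A (a,x,y)) * A (b,q,r)) *
            ((if q = x then (1:ℂ) else 0) * ⟪adjoint (c r) η, adjoint (c y) ξ⟫))
      + (∑ x ∈ B₀, ∑ y ∈ B₀, ∑ q ∈ B₀, ∑ r ∈ B₀,
          ((starRingEnd ℂ) (A (a,x,y)) * A (b,q,r)) *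
            ((if r = x then (1:ℂ) else 0) * ⟪adjoint (c q) η, adjoint (c y) ξ⟫))
      + (∑ x ∈ B₀, ∑ y ∈ B₀, ∑ q ∈ B₀, ∑ r ∈ B₀,
          ((starRingEnd ℂ) (A (a,x,y)) * A (b,q,r)) *
            ((if q = y then (1:ℂ) else 0) * ⟪adjoint (c r) η, adjoint (c x) ξ⟫))
      - (∑ x ∈ B₀, ∑ y ∈ B₀, ∑ q ∈ B₀, ∑ r ∈ B₀,
          ((starRingEnd ℂ) (A (a,x,y)) * A (b,q,r)) *
            ((if r = y then (1:ℂ) else 0) * ⟪adjoint (c q) η, adjoint (c x) ξ⟫))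
      + (∑ x ∈ B₀, ∑ y ∈ B₀, ∑ q ∈ B₀, ∑ r ∈ B₀,
          ((starRingEnd ℂ) (A (a,x,y)) * A (b,q,r)) *
            ⟪adjoint (c r) (adjoint (c q) η), adjoint (c y) (adjoint (c x) ξ)⟫) := by
    rw [step1]
    simp only [← Finset.sum_add_distrib, ← Finset.sum_sub_distrib]
    refine Finset.sum_congr rfl fun x _ => Finset.sum_congr rfl fun y _ =>
      Finset.sum_congr rfl fun q _ => Finset.sum_congr rfl fun r _ => ?_
    rw [star_id c h2 x y q r η ξ]
    ring
  rw [step2]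
  -- now identify each of the seven pieces
  have e1 : (∑ x ∈ B₀, ∑ y ∈ B₀, ∑ q ∈ B₀, ∑ r ∈ B₀,
          ((starRingEnd ℂ) (A (a,x,y)) * A (b,q,r)) *
            ((if q = x then (1:ℂ) else 0) * (if r = y then (1:ℂ) else 0) * ⟪η, ξ⟫))
      = (∑ q ∈ B₀, ∑ r ∈ B₀, (starRingEnd ℂ) (A (a,q,r)) * A (b,q,r)) * ⟪η, ξ⟫ := by
    rw [Lc1 B₀ (fun x y q r => (starRingEnd ℂ) (A (a,x,y)) * A (b,q,r))
      (fun x y q r => ⟪η, ξ⟫), Finset.sum_mul]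
    exact Finset.sum_congr rfl fun q _ => by rw [Finset.sum_mul]
  have e2 : (∑ x ∈ B₀, ∑ y ∈ B₀, ∑ q ∈ B₀, ∑ r ∈ B₀,
          ((starRingEnd ℂ) (A (a,x,y)) * A (b,q,r)) *
            ((if r = x then (1:ℂ) else 0) * (if q = y then (1:ℂ) else 0) * ⟪η, ξ⟫))
      = (∑ q ∈ B₀, ∑ r ∈ B₀, (starRingEnd ℂ) (A (a,r,q)) * A (b,q,r)) * ⟪η, ξ⟫ := by
    rw [Lc2 B₀ (fun x y q r => (starRingEnd ℂ) (A (a,x,y)) * A (b,q,r))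
      (fun x y q r => ⟪η, ξ⟫), Finset.sum_mul]
    exact Finset.sum_congr rfl fun q _ => by rw [Finset.sum_mul]
  have e3 : (∑ x ∈ B₀, ∑ y ∈ B₀, ∑ q ∈ B₀, ∑ r ∈ B₀,
          ((starRingEnd ℂ) (A (a,x,y)) * A (b,q,r)) *
            ((if q = x then (1:ℂ) else 0) * ⟪adjoint (c r) η, adjoint (c y) ξ⟫))
      = ∑ q ∈ B₀, ⟪gm c A B₀ b q η, gm c A B₀ a q ξ⟫ := by
    rw [Lc3 B₀ (fun x y q r => (starRingEnd ℂ) (A (a,x,y)) * A (b,q,r))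
      (fun x y q r => ⟪adjoint (c r) η, adjoint (c y) ξ⟫)]
    refine Finset.sum_congr rfl fun q _ => ?_
    rw [gm, gm, inner_sum2' B₀ B₀ (fun r => (starRingEnd ℂ) (A (b,q,r)))
      (fun y => (starRingEnd ℂ) (A (a,q,y))) (fun r => adjoint (c r) η)
      (fun y => adjoint (c y) ξ)]
    refine Finset.sum_congr rfl fun r _ => Finset.sum_congr rfl fun y _ => ?_
    rw [Complex.conj_conj]; ring
  have e4 : (∑ x ∈ B₀, ∑ y ∈ B₀, ∑ q ∈ B₀, ∑ r ∈ B₀,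
          ((starRingEnd ℂ) (A (a,x,y)) * A (b,q,r)) *
            ((if r = x then (1:ℂ) else 0) * ⟪adjoint (c q) η, adjoint (c y) ξ⟫))
      = ∑ r ∈ B₀, ⟪gmQ c A B₀ b r η, gm2 c A B₀ a r ξ⟫ := by
    rw [Lc4 B₀ (fun x y q r => (starRingEnd ℂ) (A (a,x,y)) * A (b,q,r))
      (fun x y q r => ⟪adjoint (c q) η, adjoint (c y) ξ⟫), Finset.sum_comm]
    refine Finset.sum_congr rfl fun r _ => ?_
    rw [gmQ, gm2, inner_sum2' B₀ B₀ (fun q => (starRingEnd ℂ) (A (b,q,r)))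
      (fun y => (starRingEnd ℂ) (A (a,r,y))) (fun q => adjoint (c q) η)
      (fun y => adjoint (c y) ξ)]
    refine Finset.sum_congr rfl fun q _ => Finset.sum_congr rfl fun y _ => ?_
    rw [Complex.conj_conj]; ring
  have e5 : (∑ x ∈ B₀, ∑ y ∈ B₀, ∑ q ∈ B₀, ∑ r ∈ B₀,
          ((starRingEnd ℂ) (A (a,x,y)) * A (b,q,r)) *
            ((if q = y then (1:ℂ) else 0) * ⟪adjoint (c r) η, adjoint (c x) ξ⟫))
      = ∑ q ∈ B₀, ⟪gm c A B₀ b q η, gm3 c A B₀ a q ξ⟫ := by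
    rw [Lc5 B₀ (fun x y q r => (starRingEnd ℂ) (A (a,x,y)) * A (b,q,r))
      (fun x y q r => ⟪adjoint (c r) η, adjoint (c x) ξ⟫)]
    refine Finset.sum_congr rfl fun q _ => ?_
    rw [gm, gm3, inner_sum2' B₀ B₀ (fun r => (starRingEnd ℂ) (A (b,q,r)))
      (fun x => (starRingEnd ℂ) (A (a,x,q))) (fun r => adjoint (c r) η)
      (fun x => adjoint (c x) ξ)]
    refine Finset.sum_congr rfl fun r _ => Finset.sum_congr rfl fun x _ => ?_
    rw [Complex.conj_conj]; ring
  have e6 : (∑ x ∈ B₀, ∑ y ∈ B₀, ∑ q ∈ B₀, ∑ r ∈ B₀,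
          ((starRingEnd ℂ) (A (a,x,y)) * A (b,q,r)) *
            ((if r = y then (1:ℂ) else 0) * ⟪adjoint (c q) η, adjoint (c x) ξ⟫))
      = ∑ r ∈ B₀, ⟪gmQ c A B₀ b r η, gmQ c A B₀ a r ξ⟫ := by
    rw [Lc6 B₀ (fun x y q r => (starRingEnd ℂ) (A (a,x,y)) * A (b,q,r))
      (fun x y q r => ⟪adjoint (c q) η, adjoint (c x) ξ⟫), Finset.sum_comm]
    refine Finset.sum_congr rfl fun r _ => ?_
    rw [gmQ, gmQ, inner_sum2' B₀ B₀ (fun q => (starRingEnd ℂ) (A (b,q,r)))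
      (fun x => (starRingEnd ℂ) (A (a,x,r))) (fun q => adjoint (c q) η)
      (fun x => adjoint (c x) ξ)]
    refine Finset.sum_congr rfl fun q _ => Finset.sum_congr rfl fun x _ => ?_
    rw [Complex.conj_conj]; ring
  have e7 : (∑ x ∈ B₀, ∑ y ∈ B₀, ∑ q ∈ B₀, ∑ r ∈ B₀,
          ((starRingEnd ℂ) (A (a,x,y)) * A (b,q,r)) *
            ⟪adjoint (c r) (adjoint (c q) η), adjoint (c y) (adjoint (c x) ξ)⟫)
      = ⟪DD c A B₀ b η, DD c A B₀ a ξ⟫ := by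
    rw [DD, DD, inner_sum4' B₀ B₀ B₀ B₀ (fun q r => (starRingEnd ℂ) (A (b,q,r)))
      (fun x y => (starRingEnd ℂ) (A (a,x,y)))
      (fun q r => adjoint (c r) (adjoint (c q) η))
      (fun x y => adjoint (c y) (adjoint (c x) ξ)), sum_swap4]
    refine Finset.sum_congr rfl fun x _ => Finset.sum_congr rfl fun y _ =>
      Finset.sum_congr rfl fun q _ => Finset.sum_congr rfl fun r _ => ?_
    rw [Complex.conj_conj]; ring
  rw [e1, e2, e3, e4, e5, e6, e7]

variable (P₀ : Finset V)

-- helper: three-fold rotation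
lemma sum_rot3 {M : Type*} [AddCommMonoid M] {α β γ : Type*} (s : Finset α) (t : Finset β)
    (u : Finset γ) (F : α → β → γ → M) :
    (∑ a ∈ s, ∑ b ∈ t, ∑ x ∈ u, F a b x) = ∑ x ∈ u, ∑ b ∈ t, ∑ a ∈ s, F a b x := by
  calc (∑ a ∈ s, ∑ b ∈ t, ∑ x ∈ u, F a b x)
      = ∑ a ∈ s, ∑ x ∈ u, ∑ b ∈ t, F a b x :=
        Finset.sum_congr rfl fun a _ => Finset.sum_comm
    _ = ∑ x ∈ u, ∑ a ∈ s, ∑ b ∈ t, F a b x := Finset.sum_comm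
    _ = ∑ x ∈ u, ∑ b ∈ t, ∑ a ∈ s, F a b x :=
        Finset.sum_congr rfl fun x _ => Finset.sum_comm


-- moves of single c through vv
lemma cmove (h2 : ∀ p q, c p * adjoint (c q) + adjoint (c q) * c p
      = if p = q then (1 : H →L[ℂ] H) else 0) (a b : V) (ζ : H) :
    c a (adjoint (c b) ζ) = (if a = b then ζ else 0) - adjoint (c b) (c a ζ) := by
  have := congrArg (fun T : H →L[ℂ] H => T ζ) (h2 a b)
  simp only [ContinuousLinearMap.add_apply, ContinuousLinearMap.mul_apply] at this
  by_cases h : a = b <;> simp [h] at this ⊢ <;> linear_combination (norm := abel) this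

lemma vv_move (h1 : ∀ p q, c p * c q + c q * c p = 0) (t e : V) (ζ : H) :
    c t (vv c A B₀ e ζ) = vv c A B₀ e (c t ζ) := by
  rw [vv, vv, map_sum]
  refine Finset.sum_congr rfl fun q _ => ?_
  rw [map_sum]
  refine Finset.sum_congr rfl fun r _ => ?_
  rw [map_smul]
  congr 1
  rw [vcar1 c h1 t q (c r ζ), vcar1 c h1 t r ζ, map_neg, neg_neg]

lemma cross_pt (h2 : ∀ p q, c p * adjoint (c q) + adjoint (c q) * c p
      = if p = q then (1 : H →L[ℂ] H) else 0) (a p : V) (u w : H) :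
    ⟪adjoint (c a) u, adjoint (c p) w⟫
      = (if a = p then ⟪u, w⟫ else 0) - ⟪c p u, c a w⟫ := by
  rw [ContinuousLinearMap.adjoint_inner_left (c a), cmove c h2 a p w, inner_sub_right,
    apply_ite (fun v => (⟪u, v⟫ : ℂ)), inner_zero_right,
    ContinuousLinearMap.adjoint_inner_right (c p)]

theorem core (h1 : ∀ p q, c p * c q + c q * c p = 0)
    (h2 : ∀ p q, c p * adjoint (c q) + adjoint (c q) * c p
      = if p = q then (1 : H →L[ℂ] H) else 0) (Ψ : H) :
    ‖∑ p ∈ P₀, adjoint (c p) (vv c A B₀ p Ψ)‖ ^ 2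
      ≤ (∑ p ∈ P₀, ∑ q ∈ B₀, ∑ r ∈ B₀, ‖A (p,q,r)‖ ^ 2) *
        (5 * ‖Ψ‖ ^ 2 + (∑ q ∈ B₀, ‖adjoint (c q) Ψ‖ ^ 2)
          + 4 * (∑ p ∈ P₀, ‖c p Ψ‖ ^ 2)) := by
  classical
  set T : H := ∑ p ∈ P₀, adjoint (c p) (vv c A B₀ p Ψ) with hT
  set SA : ℝ := ∑ p ∈ P₀, ∑ q ∈ B₀, ∑ r ∈ B₀, ‖A (p,q,r)‖ ^ 2 with hSA
  set NB : ℝ := ∑ q ∈ B₀, ‖adjoint (c q) Ψ‖ ^ 2 with hNB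
  set NP : ℝ := ∑ p ∈ P₀, ‖c p Ψ‖ ^ 2 with hNP
  -- Stage 1 : ⟪T,T⟫ = Σ_p ⟪vv p Ψ, vv p Ψ⟫ - Σ_a Σ_p ⟪vv a (c_p Ψ), vv p (c_a Ψ)⟫
  have stage1 : ⟪T, T⟫ = (∑ p ∈ P₀, ⟪vv c A B₀ p Ψ, vv c A B₀ p Ψ⟫)
      - ∑ a ∈ P₀, ∑ p ∈ P₀, ⟪vv c A B₀ a (c p Ψ), vv c A B₀ p (c a Ψ)⟫ := by
    rw [hT, sum_inner]
    have pt : ∀ a ∈ P₀, ∀ p ∈ P₀,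
        ⟪adjoint (c a) (vv c A B₀ a Ψ), adjoint (c p) (vv c A B₀ p Ψ)⟫
        = (if a = p then ⟪vv c A B₀ a Ψ, vv c A B₀ p Ψ⟫ else 0)
          - ⟪vv c A B₀ a (c p Ψ), vv c A B₀ p (c a Ψ)⟫ := by
      intro a _ p _
      rw [cross_pt c h2 a p, vv_move c A B₀ h1 p a Ψ, vv_move c A B₀ h1 a p Ψ]
    calc (∑ a ∈ P₀, ⟪adjoint (c a) (vv c A B₀ a Ψ), T⟫)
        = ∑ a ∈ P₀, ∑ p ∈ P₀,
            ((if a = p then ⟪vv c A B₀ a Ψ, vv c A B₀ p Ψ⟫ else 0)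
              - ⟪vv c A B₀ a (c p Ψ), vv c A B₀ p (c a Ψ)⟫) := by
          refine Finset.sum_congr rfl fun a ha => ?_
          rw [hT, inner_sum]
          exact Finset.sum_congr rfl fun p hp => pt a ha p hp
      _ = (∑ a ∈ P₀, ∑ p ∈ P₀,
            if a = p then ⟪vv c A B₀ a Ψ, vv c A B₀ p Ψ⟫ else 0)
          - ∑ a ∈ P₀, ∑ p ∈ P₀, ⟪vv c A B₀ a (c p Ψ), vv c A B₀ p (c a Ψ)⟫ := by
          rw [← Finset.sum_sub_distrib]
          exact Finset.sum_congr rfl fun a _ => by rw [← Finset.sum_sub_distrib]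
      _ = (∑ p ∈ P₀, ⟪vv c A B₀ p Ψ, vv c A B₀ p Ψ⟫)
          - ∑ a ∈ P₀, ∑ p ∈ P₀, ⟪vv c A B₀ a (c p Ψ), vv c A B₀ p (c a Ψ)⟫ := by
          rw [Lc0 P₀ fun a p => ⟪vv c A B₀ a Ψ, vv c A B₀ p Ψ⟫]

  -- the diagonal expansion
  set D1 : ℂ := ∑ p ∈ P₀, ((∑ q ∈ B₀, ∑ r ∈ B₀, (starRingEnd ℂ) (A (p,q,r)) * A (p,q,r)) * ⟪Ψ, Ψ⟫) with hD1
  set D2 : ℂ := ∑ p ∈ P₀, ((∑ q ∈ B₀, ∑ r ∈ B₀, (starRingEnd ℂ) (A (p,r,q)) * A (p,q,r)) * ⟪Ψ, Ψ⟫) with hD2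
  set D3 : ℂ := ∑ p ∈ P₀, ∑ q ∈ B₀, ⟪gm c A B₀ p q Ψ, gm c A B₀ p q Ψ⟫ with hD3
  set D4 : ℂ := ∑ p ∈ P₀, ∑ r ∈ B₀, ⟪gmQ c A B₀ p r Ψ, gm2 c A B₀ p r Ψ⟫ with hD4
  set D5 : ℂ := ∑ p ∈ P₀, ∑ q ∈ B₀, ⟪gm c A B₀ p q Ψ, gm3 c A B₀ p q Ψ⟫ with hD5
  set D6 : ℂ := ∑ p ∈ P₀, ∑ r ∈ B₀, ⟪gmQ c A B₀ p r Ψ, gmQ c A B₀ p r Ψ⟫ with hD6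
  set D7 : ℂ := ∑ p ∈ P₀, ⟪DD c A B₀ p Ψ, DD c A B₀ p Ψ⟫ with hD7
  set X1 : ℂ := ∑ a ∈ P₀, ∑ p ∈ P₀,
    ((∑ q ∈ B₀, ∑ r ∈ B₀, (starRingEnd ℂ) (A (a,q,r)) * A (p,q,r)) * ⟪c p Ψ, c a Ψ⟫) with hX1
  set X2 : ℂ := ∑ a ∈ P₀, ∑ p ∈ P₀,
    ((∑ q ∈ B₀, ∑ r ∈ B₀, (starRingEnd ℂ) (A (a,r,q)) * A (p,q,r)) * ⟪c p Ψ, c a Ψ⟫) with hX2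
  set X3 : ℂ := ∑ a ∈ P₀, ∑ p ∈ P₀, ∑ q ∈ B₀,
    ⟪gm c A B₀ p q (c p Ψ), gm c A B₀ a q (c a Ψ)⟫ with hX3
  set X4 : ℂ := ∑ a ∈ P₀, ∑ p ∈ P₀, ∑ r ∈ B₀,
    ⟪gmQ c A B₀ p r (c p Ψ), gm2 c A B₀ a r (c a Ψ)⟫ with hX4
  set X5 : ℂ := ∑ a ∈ P₀, ∑ p ∈ P₀, ∑ q ∈ B₀,
    ⟪gm c A B₀ p q (c p Ψ), gm3 c A B₀ a q (c a Ψ)⟫ with hX5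
  set X6 : ℂ := ∑ a ∈ P₀, ∑ p ∈ P₀, ∑ r ∈ B₀,
    ⟪gmQ c A B₀ p r (c p Ψ), gmQ c A B₀ a r (c a Ψ)⟫ with hX6
  set X7 : ℂ := ∑ a ∈ P₀, ∑ p ∈ P₀, ⟪DD c A B₀ p (c p Ψ), DD c A B₀ a (c a Ψ)⟫ with hX7
  have expand_diag : (∑ p ∈ P₀, ⟪vv c A B₀ p Ψ, vv c A B₀ p Ψ⟫)
      = D1 - D2 - D3 + D4 + D5 - D6 + D7 := by
    rw [Finset.sum_congr rfl fun p (_ : p ∈ P₀) => IDENT2 c A B₀ h2 p p Ψ Ψ]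
    simp only [Finset.sum_add_distrib, Finset.sum_sub_distrib]
    rfl
  have expand_cross : (∑ a ∈ P₀, ∑ p ∈ P₀, ⟪vv c A B₀ a (c p Ψ), vv c A B₀ p (c a Ψ)⟫)
      = X1 - X2 - X3 + X4 + X5 - X6 + X7 := by
    rw [Finset.sum_congr rfl fun a (_ : a ∈ P₀) => Finset.sum_congr rfl
      fun p (_ : p ∈ P₀) => IDENT2 c A B₀ h2 a p (c p Ψ) (c a Ψ)]
    simp only [Finset.sum_add_distrib, Finset.sum_sub_distrib]
    rfl
  have main_id : ⟪T, T⟫ = D1 - D2 - D3 + D4 + D5 - D6 + D7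
      - (X1 - X2 - X3 + X4 + X5 - X6 + X7) := by
    rw [stage1, expand_diag, expand_cross]

  -- regroup the cross terms
  have hed : ∀ p q : V, (fun v => adjoint (c v)) p * adjoint ((fun v => adjoint (c v)) q)
      + adjoint ((fun v => adjoint (c v)) q) * (fun v => adjoint (c v)) p
      = if p = q then (1 : H →L[ℂ] H) else 0 := by
    intro p q
    simp only [ContinuousLinearMap.adjoint_adjoint]
    rw [add_comm, h2 q p]
    exact if_congr eq_comm rfl rfl
  have hlinDn : ∀ (f : V → ℂ) (ζ : H),
      ‖∑ s ∈ B₀, (starRingEnd ℂ) (f s) • adjoint (c s) ζ‖ ^ 2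
        ≤ (∑ s ∈ B₀, ‖f s‖ ^ 2) * ‖ζ‖ ^ 2 := by
    intro f ζ
    have := lin (fun v => adjoint (c v)) hed B₀ (fun s => (starRingEnd ℂ) (f s)) ζ
    simpa [RCLike.norm_conj] using this
  have hlinCn : ∀ (f : V → ℂ) (ζ : H),
      ‖∑ p ∈ P₀, (starRingEnd ℂ) (f p) • c p ζ‖ ^ 2
        ≤ (∑ p ∈ P₀, ‖f p‖ ^ 2) * ‖ζ‖ ^ 2 := by
    intro f ζ
    have := lin c h2 P₀ (fun p => (starRingEnd ℂ) (f p)) ζ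
    simpa [RCLike.norm_conj] using this
  have htwoDn : ∀ (s : Finset V) (f : V → V → ℂ) (ξ : V → H),
      ‖∑ i ∈ s, ∑ j ∈ B₀, (starRingEnd ℂ) (f i j) • adjoint (c j) (ξ i)‖ ^ 2
        ≤ (∑ i ∈ s, ∑ j ∈ B₀, ‖f i j‖ ^ 2) * (∑ i ∈ s, ‖ξ i‖ ^ 2) := by
    intro s f ξ
    have := two_stage (fun v => adjoint (c v)) hed s B₀
      (fun i j => (starRingEnd ℂ) (f i j)) ξ
    simpa [RCLike.norm_conj] using this
  -- cross regroupings
  have hC1 : X1 = ∑ q ∈ B₀, ∑ r ∈ B₀,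
      ⟪∑ p ∈ P₀, (starRingEnd ℂ) (A (p,q,r)) • c p Ψ,
       ∑ p ∈ P₀, (starRingEnd ℂ) (A (p,q,r)) • c p Ψ⟫ := by
    rw [hX1]
    calc (∑ a ∈ P₀, ∑ p ∈ P₀,
        ((∑ q ∈ B₀, ∑ r ∈ B₀, (starRingEnd ℂ) (A (a,q,r)) * A (p,q,r)) * ⟪c p Ψ, c a Ψ⟫))
        = ∑ a ∈ P₀, ∑ p ∈ P₀, ∑ q ∈ B₀, ∑ r ∈ B₀,
            (starRingEnd ℂ) (A (a,q,r)) * A (p,q,r) * ⟪c p Ψ, c a Ψ⟫ := by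
          refine Finset.sum_congr rfl fun a _ => Finset.sum_congr rfl fun p _ => ?_
          rw [Finset.sum_mul]
          exact Finset.sum_congr rfl fun q _ => by rw [Finset.sum_mul]
      _ = ∑ q ∈ B₀, ∑ r ∈ B₀, ∑ a ∈ P₀, ∑ p ∈ P₀,
            (starRingEnd ℂ) (A (a,q,r)) * A (p,q,r) * ⟪c p Ψ, c a Ψ⟫ :=
          sum_swap4 P₀ P₀ B₀ B₀ _
      _ = ∑ q ∈ B₀, ∑ r ∈ B₀,
          ⟪∑ p ∈ P₀, (starRingEnd ℂ) (A (p,q,r)) • c p Ψ,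
           ∑ p ∈ P₀, (starRingEnd ℂ) (A (p,q,r)) • c p Ψ⟫ := by
          refine Finset.sum_congr rfl fun q _ => Finset.sum_congr rfl fun r _ => ?_
          rw [inner_sum2' P₀ P₀ (fun p => (starRingEnd ℂ) (A (p,q,r)))
            (fun p => (starRingEnd ℂ) (A (p,q,r))) (fun p => c p Ψ) (fun p => c p Ψ),
            Finset.sum_comm]
          refine Finset.sum_congr rfl fun a _ => Finset.sum_congr rfl fun p _ => ?_
          rw [Complex.conj_conj]; ring
  have hC2 : X2 = ∑ q ∈ B₀, ∑ r ∈ B₀,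
      ⟪∑ p ∈ P₀, (starRingEnd ℂ) (A (p,q,r)) • c p Ψ,
       ∑ p ∈ P₀, (starRingEnd ℂ) (A (p,r,q)) • c p Ψ⟫ := by
    rw [hX2]
    calc (∑ a ∈ P₀, ∑ p ∈ P₀,
        ((∑ q ∈ B₀, ∑ r ∈ B₀, (starRingEnd ℂ) (A (a,r,q)) * A (p,q,r)) * ⟪c p Ψ, c a Ψ⟫))
        = ∑ a ∈ P₀, ∑ p ∈ P₀, ∑ q ∈ B₀, ∑ r ∈ B₀,
            (starRingEnd ℂ) (A (a,r,q)) * A (p,q,r) * ⟪c p Ψ, c a Ψ⟫ := by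
          refine Finset.sum_congr rfl fun a _ => Finset.sum_congr rfl fun p _ => ?_
          rw [Finset.sum_mul]
          exact Finset.sum_congr rfl fun q _ => by rw [Finset.sum_mul]
      _ = ∑ q ∈ B₀, ∑ r ∈ B₀, ∑ a ∈ P₀, ∑ p ∈ P₀,
            (starRingEnd ℂ) (A (a,r,q)) * A (p,q,r) * ⟪c p Ψ, c a Ψ⟫ :=
          sum_swap4 P₀ P₀ B₀ B₀ _
      _ = ∑ q ∈ B₀, ∑ r ∈ B₀,
          ⟪∑ p ∈ P₀, (starRingEnd ℂ) (A (p,q,r)) • c p Ψ,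
           ∑ p ∈ P₀, (starRingEnd ℂ) (A (p,r,q)) • c p Ψ⟫ := by
          refine Finset.sum_congr rfl fun q _ => Finset.sum_congr rfl fun r _ => ?_
          rw [inner_sum2' P₀ P₀ (fun p => (starRingEnd ℂ) (A (p,q,r)))
            (fun p => (starRingEnd ℂ) (A (p,r,q))) (fun p => c p Ψ) (fun p => c p Ψ),
            Finset.sum_comm]
          refine Finset.sum_congr rfl fun a _ => Finset.sum_congr rfl fun p _ => ?_
          rw [Complex.conj_conj]; ring
  have hgm_sum : ∀ q : V, (∑ p ∈ P₀, gm c A B₀ p q (c p Ψ))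
      = ∑ p ∈ P₀, ∑ r ∈ B₀, (starRingEnd ℂ) (A (p,q,r)) • adjoint (c r) (c p Ψ) :=
    fun q => Finset.sum_congr rfl fun p _ => rfl
  have hC3 : X3 = ∑ q ∈ B₀,
      ⟪∑ p ∈ P₀, gm c A B₀ p q (c p Ψ), ∑ p ∈ P₀, gm c A B₀ p q (c p Ψ)⟫ := by
    rw [hX3, sum_rot3]
    refine Finset.sum_congr rfl fun q _ => ?_
    rw [sum_inner]
    refine Finset.sum_congr rfl fun p _ => ?_
    rw [inner_sum]
  have hC4 : X4 = ∑ r ∈ B₀,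
      ⟪∑ p ∈ P₀, gmQ c A B₀ p r (c p Ψ), ∑ p ∈ P₀, gm2 c A B₀ p r (c p Ψ)⟫ := by
    rw [hX4, sum_rot3]
    refine Finset.sum_congr rfl fun r _ => ?_
    rw [sum_inner]
    refine Finset.sum_congr rfl fun p _ => ?_
    rw [inner_sum]
  have hC5 : X5 = ∑ q ∈ B₀,
      ⟪∑ p ∈ P₀, gm c A B₀ p q (c p Ψ), ∑ p ∈ P₀, gm3 c A B₀ p q (c p Ψ)⟫ := by
    rw [hX5, sum_rot3]
    refine Finset.sum_congr rfl fun q _ => ?_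
    rw [sum_inner]
    refine Finset.sum_congr rfl fun p _ => ?_
    rw [inner_sum]
  have hC6 : X6 = ∑ r ∈ B₀,
      ⟪∑ p ∈ P₀, gmQ c A B₀ p r (c p Ψ), ∑ p ∈ P₀, gmQ c A B₀ p r (c p Ψ)⟫ := by
    rw [hX6, sum_rot3]
    refine Finset.sum_congr rfl fun r _ => ?_
    rw [sum_inner]
    refine Finset.sum_congr rfl fun p _ => ?_
    rw [inner_sum]
  have hC7 : X7 = ⟪∑ p ∈ P₀, DD c A B₀ p (c p Ψ), ∑ p ∈ P₀, DD c A B₀ p (c p Ψ)⟫ := by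
    rw [hX7, Finset.sum_comm, sum_inner]
    refine Finset.sum_congr rfl fun p _ => ?_
    rw [inner_sum]

  -- norm bounds
  have sbb : (∑ q ∈ B₀, ∑ r ∈ B₀,
      ‖∑ p ∈ P₀, (starRingEnd ℂ) (A (p,q,r)) • c p Ψ‖ ^ 2) ≤ SA * ‖Ψ‖ ^ 2 := by
    calc (∑ q ∈ B₀, ∑ r ∈ B₀, ‖∑ p ∈ P₀, (starRingEnd ℂ) (A (p,q,r)) • c p Ψ‖ ^ 2)
        ≤ ∑ q ∈ B₀, ∑ r ∈ B₀, (∑ p ∈ P₀, ‖A (p,q,r)‖ ^ 2) * ‖Ψ‖ ^ 2 :=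
          Finset.sum_le_sum fun q _ => Finset.sum_le_sum fun r _ =>
            hlinCn (fun p => A (p,q,r)) Ψ
      _ = SA * ‖Ψ‖ ^ 2 := by
          rw [hSA]
          rw [show (∑ p ∈ P₀, ∑ q ∈ B₀, ∑ r ∈ B₀, ‖A (p,q,r)‖ ^ 2)
            = ∑ q ∈ B₀, ∑ r ∈ B₀, ∑ p ∈ P₀, ‖A (p,q,r)‖ ^ 2 from by
              rw [sum_rot3 P₀ B₀ B₀ fun p q r => ‖A (p,q,r)‖ ^ 2]
              exact Finset.sum_comm, Finset.sum_mul]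
          exact Finset.sum_congr rfl fun q _ => by rw [Finset.sum_mul]

  have SAo2 : SA = ∑ q ∈ B₀, ∑ p ∈ P₀, ∑ r ∈ B₀, ‖A (p,q,r)‖ ^ 2 := by
    rw [hSA]; exact Finset.sum_comm
  have SAo3 : SA = ∑ r ∈ B₀, ∑ p ∈ P₀, ∑ q ∈ B₀, ‖A (p,q,r)‖ ^ 2 := by
    rw [hSA]
    rw [show (∑ p ∈ P₀, ∑ q ∈ B₀, ∑ r ∈ B₀, ‖A (p,q,r)‖ ^ 2)
      = ∑ p ∈ P₀, ∑ r ∈ B₀, ∑ q ∈ B₀, ‖A (p,q,r)‖ ^ 2 from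
      Finset.sum_congr rfl fun p _ => Finset.sum_comm]
    exact Finset.sum_comm
  have pullNP : ∀ (S : V → ℝ) (t : Finset V), (∑ i ∈ t, S i * NP) = (∑ i ∈ t, S i) * NP :=
    fun S t => (Finset.sum_mul ..).symm
  have szz : (∑ q ∈ B₀, ‖∑ p ∈ P₀, gm c A B₀ p q (c p Ψ)‖ ^ 2) ≤ SA * NP := by
    calc (∑ q ∈ B₀, ‖∑ p ∈ P₀, gm c A B₀ p q (c p Ψ)‖ ^ 2)
        ≤ ∑ q ∈ B₀, (∑ p ∈ P₀, ∑ r ∈ B₀, ‖A (p,q,r)‖ ^ 2) * NP := by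
          refine Finset.sum_le_sum fun q _ => ?_
          rw [hgm_sum q]
          exact htwoDn P₀ (fun p r => A (p,q,r)) (fun p => c p Ψ)
      _ = SA * NP := by rw [pullNP, ← SAo2]
  have hgmQ_sum : ∀ r : V, (∑ p ∈ P₀, gmQ c A B₀ p r (c p Ψ))
      = ∑ p ∈ P₀, ∑ q ∈ B₀, (starRingEnd ℂ) (A (p,q,r)) • adjoint (c q) (c p Ψ) :=
    fun r => Finset.sum_congr rfl fun p _ => rfl
  have hgm2_sum : ∀ r : V, (∑ p ∈ P₀, gm2 c A B₀ p r (c p Ψ))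
      = ∑ p ∈ P₀, ∑ t ∈ B₀, (starRingEnd ℂ) (A (p,r,t)) • adjoint (c t) (c p Ψ) :=
    fun r => Finset.sum_congr rfl fun p _ => rfl
  have hgm3_sum : ∀ q : V, (∑ p ∈ P₀, gm3 c A B₀ p q (c p Ψ))
      = ∑ p ∈ P₀, ∑ t ∈ B₀, (starRingEnd ℂ) (A (p,t,q)) • adjoint (c t) (c p Ψ) :=
    fun q => Finset.sum_congr rfl fun p _ => rfl
  have szQ : (∑ r ∈ B₀, ‖∑ p ∈ P₀, gmQ c A B₀ p r (c p Ψ)‖ ^ 2) ≤ SA * NP := by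
    calc (∑ r ∈ B₀, ‖∑ p ∈ P₀, gmQ c A B₀ p r (c p Ψ)‖ ^ 2)
        ≤ ∑ r ∈ B₀, (∑ p ∈ P₀, ∑ q ∈ B₀, ‖A (p,q,r)‖ ^ 2) * NP := by
          refine Finset.sum_le_sum fun r _ => ?_
          rw [hgmQ_sum r]
          exact htwoDn P₀ (fun p q => A (p,q,r)) (fun p => c p Ψ)
      _ = SA * NP := by rw [pullNP, ← SAo3]
  have sw2 : (∑ r ∈ B₀, ‖∑ p ∈ P₀, gm2 c A B₀ p r (c p Ψ)‖ ^ 2) ≤ SA * NP := by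
    calc (∑ r ∈ B₀, ‖∑ p ∈ P₀, gm2 c A B₀ p r (c p Ψ)‖ ^ 2)
        ≤ ∑ r ∈ B₀, (∑ p ∈ P₀, ∑ t ∈ B₀, ‖A (p,r,t)‖ ^ 2) * NP := by
          refine Finset.sum_le_sum fun r _ => ?_
          rw [hgm2_sum r]
          exact htwoDn P₀ (fun p t => A (p,r,t)) (fun p => c p Ψ)
      _ = SA * NP := by rw [pullNP, hSA, Finset.sum_comm]
  have sw3 : (∑ q ∈ B₀, ‖∑ p ∈ P₀, gm3 c A B₀ p q (c p Ψ)‖ ^ 2) ≤ SA * NP := by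
    calc (∑ q ∈ B₀, ‖∑ p ∈ P₀, gm3 c A B₀ p q (c p Ψ)‖ ^ 2)
        ≤ ∑ q ∈ B₀, (∑ p ∈ P₀, ∑ t ∈ B₀, ‖A (p,t,q)‖ ^ 2) * NP := by
          refine Finset.sum_le_sum fun q _ => ?_
          rw [hgm3_sum q]
          exact htwoDn P₀ (fun p t => A (p,t,q)) (fun p => c p Ψ)
      _ = SA * NP := by
          rw [pullNP, hSA]
          congr 1
          rw [Finset.sum_comm]
          exact Finset.sum_congr rfl fun p _ => Finset.sum_comm
  have sgm : (∑ p ∈ P₀, ∑ q ∈ B₀, ‖gm c A B₀ p q Ψ‖ ^ 2) ≤ SA * ‖Ψ‖ ^ 2 := by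
    calc (∑ p ∈ P₀, ∑ q ∈ B₀, ‖gm c A B₀ p q Ψ‖ ^ 2)
        ≤ ∑ p ∈ P₀, ∑ q ∈ B₀, (∑ r ∈ B₀, ‖A (p,q,r)‖ ^ 2) * ‖Ψ‖ ^ 2 :=
          Finset.sum_le_sum fun p _ => Finset.sum_le_sum fun q _ =>
            hlinDn (fun r => A (p,q,r)) Ψ
      _ = SA * ‖Ψ‖ ^ 2 := by
          rw [hSA, Finset.sum_mul]
          exact Finset.sum_congr rfl fun p _ => by rw [Finset.sum_mul]
  have sgm3s : (∑ p ∈ P₀, ∑ q ∈ B₀, ‖gm3 c A B₀ p q Ψ‖ ^ 2) ≤ SA * ‖Ψ‖ ^ 2 := by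
    calc (∑ p ∈ P₀, ∑ q ∈ B₀, ‖gm3 c A B₀ p q Ψ‖ ^ 2)
        ≤ ∑ p ∈ P₀, ∑ q ∈ B₀, (∑ t ∈ B₀, ‖A (p,t,q)‖ ^ 2) * ‖Ψ‖ ^ 2 :=
          Finset.sum_le_sum fun p _ => Finset.sum_le_sum fun q _ =>
            hlinDn (fun t => A (p,t,q)) Ψ
      _ = SA * ‖Ψ‖ ^ 2 := by
          rw [hSA, Finset.sum_mul]
          refine Finset.sum_congr rfl fun p _ => ?_
          rw [← Finset.sum_mul]
          congr 1
          exact Finset.sum_comm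
  have sgmQs : (∑ p ∈ P₀, ∑ r ∈ B₀, ‖gmQ c A B₀ p r Ψ‖ ^ 2) ≤ SA * ‖Ψ‖ ^ 2 := by
    calc (∑ p ∈ P₀, ∑ r ∈ B₀, ‖gmQ c A B₀ p r Ψ‖ ^ 2)
        ≤ ∑ p ∈ P₀, ∑ r ∈ B₀, (∑ q ∈ B₀, ‖A (p,q,r)‖ ^ 2) * ‖Ψ‖ ^ 2 :=
          Finset.sum_le_sum fun p _ => Finset.sum_le_sum fun r _ =>
            hlinDn (fun q => A (p,q,r)) Ψ
      _ = SA * ‖Ψ‖ ^ 2 := by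
          rw [hSA, Finset.sum_mul]
          refine Finset.sum_congr rfl fun p _ => ?_
          rw [← Finset.sum_mul]
          congr 1
          exact Finset.sum_comm
  have sgm2s : (∑ p ∈ P₀, ∑ r ∈ B₀, ‖gm2 c A B₀ p r Ψ‖ ^ 2) ≤ SA * ‖Ψ‖ ^ 2 := by
    calc (∑ p ∈ P₀, ∑ r ∈ B₀, ‖gm2 c A B₀ p r Ψ‖ ^ 2)
        ≤ ∑ p ∈ P₀, ∑ r ∈ B₀, (∑ t ∈ B₀, ‖A (p,r,t)‖ ^ 2) * ‖Ψ‖ ^ 2 :=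
          Finset.sum_le_sum fun p _ => Finset.sum_le_sum fun r _ =>
            hlinDn (fun t => A (p,r,t)) Ψ
      _ = SA * ‖Ψ‖ ^ 2 := by
          rw [hSA, Finset.sum_mul]
          exact Finset.sum_congr rfl fun p _ => by rw [Finset.sum_mul]
  -- real part bounds
  have rD1 : D1.re = SA * ‖Ψ‖ ^ 2 := by
    have h' : D1 = ∑ p ∈ P₀, ∑ q ∈ B₀, ∑ r ∈ B₀,
        (inner ℂ (A (p,q,r) • Ψ) (A (p,q,r) • Ψ) : ℂ) := by
      rw [hD1]
      refine Finset.sum_congr rfl fun p _ => ?_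
      rw [Finset.sum_mul]
      refine Finset.sum_congr rfl fun q _ => ?_
      rw [Finset.sum_mul]
      refine Finset.sum_congr rfl fun r _ => ?_
      rw [inner_smul_left, inner_smul_right]; ring
    rw [h', normsum_est3, hSA, Finset.sum_mul]
    refine Finset.sum_congr rfl fun p _ => ?_
    rw [Finset.sum_mul]
    refine Finset.sum_congr rfl fun q _ => ?_
    rw [Finset.sum_mul]
    refine Finset.sum_congr rfl fun r _ => ?_
    rw [norm_smul, mul_pow]
  have rD2 : |D2.re| ≤ SA * ‖Ψ‖ ^ 2 := by
    have h' : D2 = ∑ p ∈ P₀, ∑ q ∈ B₀, ∑ r ∈ B₀,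
        (inner ℂ (A (p,r,q) • Ψ) (A (p,q,r) • Ψ) : ℂ) := by
      rw [hD2]
      refine Finset.sum_congr rfl fun p _ => ?_
      rw [Finset.sum_mul]
      refine Finset.sum_congr rfl fun q _ => ?_
      rw [Finset.sum_mul]
      refine Finset.sum_congr rfl fun r _ => ?_
      rw [inner_smul_left, inner_smul_right]; ring
    rw [h']
    refine (pair_est3 P₀ B₀ B₀ _ _).trans ?_
    have e1 : (∑ p ∈ P₀, ∑ q ∈ B₀, ∑ r ∈ B₀, ‖A (p,r,q) • Ψ‖ ^ 2) = SA * ‖Ψ‖ ^ 2 := by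
      rw [hSA, Finset.sum_mul]
      refine Finset.sum_congr rfl fun p _ => ?_
      rw [Finset.sum_mul, Finset.sum_comm]
      refine Finset.sum_congr rfl fun q _ => ?_
      rw [Finset.sum_mul]
      exact Finset.sum_congr rfl fun r _ => by rw [norm_smul, mul_pow]
    have e2 : (∑ p ∈ P₀, ∑ q ∈ B₀, ∑ r ∈ B₀, ‖A (p,q,r) • Ψ‖ ^ 2) = SA * ‖Ψ‖ ^ 2 := by
      rw [hSA, Finset.sum_mul]
      refine Finset.sum_congr rfl fun p _ => ?_
      rw [Finset.sum_mul]
      refine Finset.sum_congr rfl fun q _ => ?_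
      rw [Finset.sum_mul]
      exact Finset.sum_congr rfl fun r _ => by rw [norm_smul, mul_pow]
    rw [e1, e2]
    linarith
  have rD3 : 0 ≤ D3.re := by
    rw [hD3, normsum_est2]
    positivity
  have rD6 : 0 ≤ D6.re := by
    rw [hD6, normsum_est2]
    positivity
  have rD4 : |D4.re| ≤ SA * ‖Ψ‖ ^ 2 := by
    rw [hD4]
    refine (pair_est2 P₀ B₀ _ _).trans ?_
    linarith [sgmQs, sgm2s]
  have rD5 : |D5.re| ≤ SA * ‖Ψ‖ ^ 2 := by
    rw [hD5]
    refine (pair_est2 P₀ B₀ _ _).trans ?_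
    linarith [sgm, sgm3s]
  have rD7 : D7.re ≤ SA * NB := by
    rw [hD7, normsum_est1]
    calc (∑ p ∈ P₀, ‖DD c A B₀ p Ψ‖ ^ 2)
        ≤ ∑ p ∈ P₀, (∑ q ∈ B₀, ∑ r ∈ B₀, ‖A (p,q,r)‖ ^ 2) * NB :=
          Finset.sum_le_sum fun p _ =>
            htwoDn B₀ (fun q r => A (p,q,r)) (fun q => adjoint (c q) Ψ)
      _ = SA * NB := by rw [hSA, ← Finset.sum_mul]
  have rX1 : 0 ≤ X1.re := by
    rw [hC1, normsum_est2]
    positivity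
  have rX7 : 0 ≤ X7.re := by
    rw [hC7]
    have h : (inner ℂ (∑ p ∈ P₀, DD c A B₀ p (c p Ψ))
        (∑ p ∈ P₀, DD c A B₀ p (c p Ψ)) : ℂ).re
        = ‖∑ p ∈ P₀, DD c A B₀ p (c p Ψ)‖ ^ 2 := inner_self_eq_norm_sq (𝕜 := ℂ) _
    rw [h]
    positivity
  have rX2 : |X2.re| ≤ SA * ‖Ψ‖ ^ 2 := by
    rw [hC2]
    refine (pair_est2 B₀ B₀ _ _).trans ?_
    have e2 : (∑ q ∈ B₀, ∑ r ∈ B₀, ‖∑ p ∈ P₀, (starRingEnd ℂ) (A (p,r,q)) • c p Ψ‖ ^ 2)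
        = ∑ q ∈ B₀, ∑ r ∈ B₀, ‖∑ p ∈ P₀, (starRingEnd ℂ) (A (p,q,r)) • c p Ψ‖ ^ 2 :=
      Finset.sum_comm
    rw [e2]
    linarith [sbb]
  have rX3 : X3.re ≤ SA * NP := by
    rw [hC3, normsum_est1]
    exact szz
  have rX6 : X6.re ≤ SA * NP := by
    rw [hC6, normsum_est1]
    exact szQ
  have rX4 : |X4.re| ≤ SA * NP := by
    rw [hC4]
    refine (pair_est1 B₀ _ _).trans ?_
    linarith [szQ, sw2]
  have rX5 : |X5.re| ≤ SA * NP := by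
    rw [hC5]
    refine (pair_est1 B₀ _ _).trans ?_
    linarith [szz, sw3]
  -- conclusion
  have hfin : ‖T‖ ^ 2 = (⟪T, T⟫).re := (inner_self_eq_norm_sq (𝕜 := ℂ) T).symm
  have hre : (⟪T, T⟫).re = D1.re - D2.re - D3.re + D4.re + D5.re - D6.re + D7.re
      - (X1.re - X2.re - X3.re + X4.re + X5.re - X6.re + X7.re) := by
    rw [main_id]
    simp [Complex.sub_re, Complex.add_re]
  have hgoal : SA * (5 * ‖Ψ‖ ^ 2 + NB + 4 * NP)
      = 5 * (SA * ‖Ψ‖ ^ 2) + SA * NB + 4 * (SA * NP) := by ring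
  rw [hfin, hre, hgoal]
  have a2 := abs_le.mp rD2
  have a4 := abs_le.mp rD4
  have a5 := abs_le.mp rD5
  have b2 := abs_le.mp rX2
  have b4 := abs_le.mp rX4
  have b5 := abs_le.mp rX5
  linarith






end core

end HOFEaux

/-- membership in the Fermi ball `B_F = {p : |p| ≤ k_F}` -/
def inBF (kF : ℝ) (p : Fin 3 → ℤ) : Prop := ((normSq p : ℝ)) ≤ kF ^ 2

/-- the higher order fermionic estimate for cubic expressions. -/
theorem higher_order_fermionic_estimate
    {H : Type*} [NormedAddCommGroup H] [InnerProductSpace ℂ H] [CompleteSpace H]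
    (c : (Fin 3 → ℤ) → H →L[ℂ] H)
    (hCAR1 : ∀ p q, c p * c q + c q * c p = 0)
    (hCAR2 : ∀ p q, c p * adjoint (c q) + adjoint (c q) * c p
        = if p = q then (1 : H →L[ℂ] H) else 0)
    (kF : ℝ) (hkF : 0 < kF)
    (BF : Finset (Fin 3 → ℤ)) (hBF : ∀ p, p ∈ BF ↔ inBF kF p)
    (A : (Fin 3 → ℤ) × (Fin 3 → ℤ) × (Fin 3 → ℤ) → ℂ)
    (hAfin : (Function.support A).Finite)
    (hAsupp : ∀ p q r, A (p, q, r) ≠ 0 → ¬ inBF kF p ∧ inBF kF q ∧ inBF kF r)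
    (Ψ : H)
    (hsum : Summable (fun p : {p : Fin 3 → ℤ // ¬ inBF kF p} => ‖c p.val Ψ‖ ^ 2))
    (heq : ∑' p : {p : Fin 3 → ℤ // ¬ inBF kF p}, ‖c p.val Ψ‖ ^ 2
        = ∑ q ∈ BF, ‖adjoint (c q) Ψ‖ ^ 2) :
    ‖∑ᶠ x : (Fin 3 → ℤ) × (Fin 3 → ℤ) × (Fin 3 → ℤ),
        A x • ((adjoint (c x.1) * c x.2.1 * c x.2.2) Ψ)‖ ^ 2
      ≤ 5 * (∑ᶠ x : (Fin 3 → ℤ) × (Fin 3 → ℤ) × (Fin 3 → ℤ), ‖A x‖ ^ 2)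
          * ((∑ q ∈ BF, ‖adjoint (c q) Ψ‖ ^ 2) + ‖Ψ‖ ^ 2) := by
  classical
  set F : Finset ((Fin 3 → ℤ) × (Fin 3 → ℤ) × (Fin 3 → ℤ)) := hAfin.toFinset with hF
  set P₀ : Finset (Fin 3 → ℤ) := F.image (fun x => x.1) with hP₀
  set B₀ : Finset (Fin 3 → ℤ) :=
    (F.image fun x => x.2.1) ∪ (F.image fun x => x.2.2) with hB₀
  set E : Finset ((Fin 3 → ℤ) × (Fin 3 → ℤ) × (Fin 3 → ℤ)) := P₀ ×ˢ (B₀ ×ˢ B₀) with hE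
  have hFE : ∀ x ∈ F, x ∈ E := by
    intro x hx
    rw [hE, Finset.mem_product]
    refine ⟨Finset.mem_image_of_mem _ hx, ?_⟩
    rw [Finset.mem_product]
    exact ⟨Finset.mem_union_left _ (Finset.mem_image_of_mem _ hx),
      Finset.mem_union_right _ (Finset.mem_image_of_mem _ hx)⟩
  have hAsub : Function.support A ⊆ (E : Set _) := fun x hx =>
    Finset.mem_coe.mpr (hFE x (by simpa [hF] using hx))
  -- convert the finsums
  have hLHS : (∑ᶠ x : (Fin 3 → ℤ) × (Fin 3 → ℤ) × (Fin 3 → ℤ),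
      A x • ((adjoint (c x.1) * c x.2.1 * c x.2.2) Ψ))
      = ∑ x ∈ E, A x • ((adjoint (c x.1) * c x.2.1 * c x.2.2) Ψ) := by
    refine finsum_eq_sum_of_support_subset _ ?_
    refine subset_trans (Function.support_subset_iff.mpr ?_) hAsub
    intro x hx
    intro hA0
    exact hx (by rw [hA0, zero_smul])
  have hRHS : (∑ᶠ x : (Fin 3 → ℤ) × (Fin 3 → ℤ) × (Fin 3 → ℤ), ‖A x‖ ^ 2)
      = ∑ x ∈ E, ‖A x‖ ^ 2 := by
    refine finsum_eq_sum_of_support_subset _ ?_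
    refine subset_trans (Function.support_subset_iff.mpr ?_) hAsub
    intro x hx hA0
    exact hx (by rw [hA0]; simp)

  -- rewrite the vector sum in the grouped form
  have hTgroup : (∑ x ∈ E, A x • ((adjoint (c x.1) * c x.2.1 * c x.2.2) Ψ))
      = ∑ p ∈ P₀, adjoint (c p) (HOFEaux.vv c A B₀ p Ψ) := by
    rw [hE, Finset.sum_product]
    refine Finset.sum_congr rfl fun p _ => ?_
    rw [Finset.sum_product, HOFEaux.vv, map_sum]
    refine Finset.sum_congr rfl fun q _ => ?_
    rw [map_sum]
    refine Finset.sum_congr rfl fun r _ => ?_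
    rw [map_smul]
    rfl
  have hRHSsplit : (∑ x ∈ E, ‖A x‖ ^ 2)
      = ∑ p ∈ P₀, ∑ q ∈ B₀, ∑ r ∈ B₀, ‖A (p,q,r)‖ ^ 2 := by
    rw [hE, Finset.sum_product]
    exact Finset.sum_congr rfl fun p _ => Finset.sum_product ..
  -- membership facts
  have hP₀mem : ∀ p ∈ P₀, ¬ inBF kF p := by
    intro p hp
    rw [hP₀] at hp
    obtain ⟨x, hxF, hx1⟩ := Finset.mem_image.mp hp
    have hAx : A x ≠ 0 := by simpa [hF, Set.Finite.mem_toFinset] using hxF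
    have := hAsupp x.1 x.2.1 x.2.2 (by simpa using hAx)
    rw [← hx1]
    exact this.1
  have hB₀mem : ∀ q ∈ B₀, q ∈ BF := by
    intro q hq
    rw [hB₀, Finset.mem_union] at hq
    rcases hq with hq | hq
    · obtain ⟨x, hxF, hx1⟩ := Finset.mem_image.mp hq
      have hAx : A x ≠ 0 := by simpa [hF, Set.Finite.mem_toFinset] using hxF
      have := hAsupp x.1 x.2.1 x.2.2 (by simpa using hAx)
      exact (hBF q).mpr (hx1 ▸ this.2.1)
    · obtain ⟨x, hxF, hx1⟩ := Finset.mem_image.mp hq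
      have hAx : A x ≠ 0 := by simpa [hF, Set.Finite.mem_toFinset] using hxF
      have := hAsupp x.1 x.2.1 x.2.2 (by simpa using hAx)
      exact (hBF q).mpr (hx1 ▸ this.2.2)
  -- numbers
  set NBF : ℝ := ∑ q ∈ BF, ‖adjoint (c q) Ψ‖ ^ 2 with hNBF
  have hNB₀le : (∑ q ∈ B₀, ‖adjoint (c q) Ψ‖ ^ 2) ≤ NBF :=
    Finset.sum_le_sum_of_subset_of_nonneg hB₀mem fun q _ _ => by positivity
  have hNP₀le : (∑ p ∈ P₀, ‖c p Ψ‖ ^ 2) ≤ NBF := by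
    rw [← heq]
    have : (∑ p ∈ P₀, ‖c p Ψ‖ ^ 2)
        = ∑ i ∈ P₀.attach.map ⟨fun x => (⟨x.1, hP₀mem x.1 x.2⟩ : {p // ¬ inBF kF p}),
            fun a b hab => Subtype.ext (congrArg Subtype.val hab : (a:Fin 3 → ℤ) = b)⟩,
          ‖c i.val Ψ‖ ^ 2 := by
      rw [Finset.sum_map]
      exact (Finset.sum_attach P₀ fun p => ‖c p Ψ‖ ^ 2).symm
    rw [this]
    exact Summable.sum_le_tsum _ (fun i _ => by positivity) hsum
  have hSAnn : (0:ℝ) ≤ ∑ p ∈ P₀, ∑ q ∈ B₀, ∑ r ∈ B₀, ‖A (p,q,r)‖ ^ 2 := by positivity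
  -- finish
  rw [hLHS, hRHS, hTgroup, hRHSsplit]
  refine le_trans (HOFEaux.core c A B₀ P₀ hCAR1 hCAR2 Ψ) ?_
  have hineq : 5 * ‖Ψ‖ ^ 2 + (∑ q ∈ B₀, ‖adjoint (c q) Ψ‖ ^ 2)
      + 4 * (∑ p ∈ P₀, ‖c p Ψ‖ ^ 2) ≤ 5 * (NBF + ‖Ψ‖ ^ 2) := by
    linarith
  calc (∑ p ∈ P₀, ∑ q ∈ B₀, ∑ r ∈ B₀, ‖A (p,q,r)‖ ^ 2) *
        (5 * ‖Ψ‖ ^ 2 + (∑ q ∈ B₀, ‖adjoint (c q) Ψ‖ ^ 2)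
          + 4 * (∑ p ∈ P₀, ‖c p Ψ‖ ^ 2))
      ≤ (∑ p ∈ P₀, ∑ q ∈ B₀, ∑ r ∈ B₀, ‖A (p,q,r)‖ ^ 2) * (5 * (NBF + ‖Ψ‖ ^ 2)) :=
        mul_le_mul_of_nonneg_left hineq hSAnn
    _ = 5 * (∑ p ∈ P₀, ∑ q ∈ B₀, ∑ r ∈ B₀, ‖A (p,q,r)‖ ^ 2) * (NBF + ‖Ψ‖ ^ 2) := by
        ring

end
end

section
/- For any k ∈ ℤ³ ∖ {0}, any real coefficient vector φ = (φ_p)_{p∈L_k} and any Ψ ∈ H, one has ‖b_k(φ) Ψ‖² ≤ (Σ_{p∈L_k} φ_p²) · ⟨Ψ, 𝒩_k Ψ⟩ and ‖b_k*(φ) Ψ‖² ≤ (Σ_{p∈L_k} φ_p²) · ( ⟨Ψ, 𝒩_k Ψ⟩ + ‖Ψ‖² ), where 𝒩_k = Σ_{p∈L_k} b_{k,p}* b_{k,p}. (Equivalently, ‖b_k(φ)Ψ‖ ≤ ‖φ‖ ‖𝒩_k^{1/2} Ψ‖ and ‖b_k*(φ)Ψ‖ ≤ ‖φ‖ ‖(𝒩_k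 + 1)^{1/2} Ψ‖.) -/
noncomputable section

open ContinuousLinearMap
open scoped InnerProductSpace

section Aux

set_option linter.unusedSectionVars false

variable {H : Type*} [NormedAddCommGroup H] [InnerProductSpace ℂ H] [CompleteSpace H]
variable {ι : Type*}

/-- Cauchy–Schwarz for finite linear combinations of vectors. -/
lemma cs_part1 (s : Finset ι) (φ : ι → ℝ) (v : ι → H) :
    ‖∑ p ∈ s, (φ p : ℂ) • v p‖ ^ 2 ≤ (∑ p ∈ s, (φ p) ^ 2) * ∑ p ∈ s, ‖v p‖ ^ 2 := by
  have h1 : ‖∑ p ∈ s, (φ p : ℂ) • v p‖ ≤ ∑ p ∈ s, |φ p| * ‖v p‖ := by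
    refine (norm_sum_le _ _).trans (le_of_eq ?_)
    refine Finset.sum_congr rfl fun p _ => ?_
    rw [norm_smul, Complex.norm_real, Real.norm_eq_abs]
  calc ‖∑ p ∈ s, (φ p : ℂ) • v p‖ ^ 2 ≤ (∑ p ∈ s, |φ p| * ‖v p‖) ^ 2 :=
        pow_le_pow_left₀ (norm_nonneg _) h1 2
    _ ≤ (∑ p ∈ s, |φ p| ^ 2) * ∑ p ∈ s, ‖v p‖ ^ 2 :=
        Finset.sum_mul_sq_le_sq_mul_sq ..
    _ = _ := by simp [sq_abs]

/-- Abstract ring identity behind the CAR commutator computation. -/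
lemma comm_aux {R : Type*} [Ring R] (A A' B' B2 D1 D2 : R)
    (h1 : A * A' = D1 - A' * A) (h2 : B2 * B' = D2 - B' * B2)
    (h3 : A * B2 = -(B2 * A)) (h4 : B' * A' = -(A' * B')) :
    (B' * A) * (A' * B2) - (A' * B2) * (B' * A)
      = B' * D1 * B2 - A' * D2 * A := by
  have e1 : (B' * A) * (A' * B2) = B' * D1 * B2 - A' * (B' * B2) * A := by
    calc (B' * A) * (A' * B2) = B' * (A * A') * B2 := by noncomm_ring
      _ = B' * (D1 - A' * A) * B2 := by rw [h1]
      _ = B' * D1 * B2 - (B' * A') * (A * B2) := by noncomm_ring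
      _ = B' * D1 * B2 - (-(A' * B')) * (-(B2 * A)) := by rw [h4, h3]
      _ = B' * D1 * B2 - A' * (B' * B2) * A := by noncomm_ring
  have e2 : (A' * B2) * (B' * A) = A' * D2 * A - A' * (B' * B2) * A := by
    calc (A' * B2) * (B' * A) = A' * (B2 * B') * A := by noncomm_ring
      _ = A' * (D2 - B' * B2) * A := by rw [h2]
      _ = A' * D2 * A - A' * (B' * B2) * A := by noncomm_ring
  rw [e1, e2]; abel

/-- The CAR commutator `[b_{k,p}, b_{k,q}*] = δ_{pq} (c_{p-k}* c_{p-k} - c_p* c_p)`. -/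
lemma comm_bp (c : (Fin 3 → ℤ) → H →L[ℂ] H)
    (hCAR1 : ∀ p q, c p * c q + c q * c p = 0)
    (hCAR2 : ∀ p q, c p * adjoint (c q) + adjoint (c q) * c p
        = if p = q then (1 : H →L[ℂ] H) else 0)
    (k p q : Fin 3 → ℤ) :
    (adjoint (c (p - k)) * c p) * (adjoint (c q) * c (q - k))
      - (adjoint (c q) * c (q - k)) * (adjoint (c (p - k)) * c p)
    = if p = q then adjoint (c (p - k)) * c (p - k) - adjoint (c p) * c p
      else 0 := by
  have hsub : (q - k = p - k) ↔ (p = q) := by rw [sub_left_inj, eq_comm]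
  have h1 : c p * adjoint (c q)
      = (if p = q then (1 : H →L[ℂ] H) else 0) - adjoint (c q) * c p :=
    eq_sub_of_add_eq (hCAR2 p q)
  have h2 : c (q - k) * adjoint (c (p - k))
      = (if p = q then (1 : H →L[ℂ] H) else 0) - adjoint (c (p - k)) * c (q - k) := by
    have h := eq_sub_of_add_eq (hCAR2 (q - k) (p - k))
    rwa [if_congr hsub rfl rfl] at h
  have h3 : c p * c (q - k) = -(c (q - k) * c p) :=
    eq_neg_of_add_eq_zero_left (hCAR1 p (q - k))
  have h4 : adjoint (c (p - k)) * adjoint (c q)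
      = -(adjoint (c q) * adjoint (c (p - k))) := by
    have h := congrArg star (hCAR1 q (p - k))
    simp only [star_add, star_mul, star_zero, star_eq_adjoint] at h
    exact eq_neg_of_add_eq_zero_left h
  have key := comm_aux (c p) (adjoint (c q)) (adjoint (c (p - k))) (c (q - k)) _ _ h1 h2 h3 h4
  rw [key]
  by_cases hpq : p = q
  · subst hpq; simp
  · simp [hpq]

/-- Commutator of linear combinations collapses to the diagonal. -/
lemma sum_expand {R : Type*} [Ring R] [Algebra ℂ R] [DecidableEq ι]
    (s : Finset ι) (φ : ι → ℝ) (T S D : ι → R)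
    (hcomm : ∀ p q, T p * S q - S q * T p = if p = q then D p else 0) :
    (∑ p ∈ s, (φ p : ℂ) • T p) * (∑ p ∈ s, (φ p : ℂ) • S p)
      - (∑ p ∈ s, (φ p : ℂ) • S p) * (∑ p ∈ s, (φ p : ℂ) • T p)
    = ∑ p ∈ s, (((φ p) ^ 2 : ℝ) : ℂ) • D p := by
  have e1 : (∑ p ∈ s, (φ p : ℂ) • T p) * (∑ p ∈ s, (φ p : ℂ) • S p)
      = ∑ p ∈ s, ∑ q ∈ s, ((φ p : ℂ) * (φ q : ℂ)) • (T p * S q) := by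
    rw [Finset.sum_mul_sum]
    exact Finset.sum_congr rfl fun p _ => Finset.sum_congr rfl fun q _ => by
      rw [smul_mul_assoc, mul_smul_comm, smul_smul]
  have e2 : (∑ p ∈ s, (φ p : ℂ) • S p) * (∑ p ∈ s, (φ p : ℂ) • T p)
      = ∑ p ∈ s, ∑ q ∈ s, ((φ p : ℂ) * (φ q : ℂ)) • (S q * T p) := by
    rw [Finset.sum_mul_sum, Finset.sum_comm]
    exact Finset.sum_congr rfl fun p _ => Finset.sum_congr rfl fun q _ => by
      rw [smul_mul_assoc, mul_smul_comm, smul_smul, mul_comm ((φ q : ℂ)) ((φ p : ℂ))]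
  rw [e1, e2, ← Finset.sum_sub_distrib]
  refine Finset.sum_congr rfl fun p hp => ?_
  rw [← Finset.sum_sub_distrib]
  have : ∀ q ∈ s, ((φ p : ℂ) * (φ q : ℂ)) • (T p * S q) - ((φ p : ℂ) * (φ q : ℂ)) • (S q * T p)
      = if p = q then ((φ p : ℂ) * (φ q : ℂ)) • D p else 0 := by
    intro q _
    rw [← smul_sub, hcomm p q]
    split <;> simp
  rw [Finset.sum_congr rfl this, Finset.sum_ite_eq, if_pos hp]
  push_cast
  rw [sq]

/-- `‖c Ψ‖² ≤ ‖Ψ‖²` from `c c* + c* c = 1`. -/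
lemma norm_c_le (a : H →L[ℂ] H) (ha : a * adjoint a + adjoint a * a = 1) (Ψ : H) :
    ‖a Ψ‖ ^ 2 ≤ ‖Ψ‖ ^ 2 := by
  have h := congrArg (fun T : H →L[ℂ] H => (inner ℂ Ψ (T Ψ) : ℂ)) ha
  simp only [add_apply, mul_apply_eq_comp, one_apply_eq_self, inner_add_right] at h
  rw [adjoint_inner_right, ← adjoint_inner_left,
    inner_self_eq_norm_sq_to_K, inner_self_eq_norm_sq_to_K, inner_self_eq_norm_sq_to_K] at h
  have h' : ‖adjoint a Ψ‖ ^ 2 + ‖a Ψ‖ ^ 2 = ‖Ψ‖ ^ 2 := by exact_mod_cast h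
  nlinarith [sq_nonneg ‖adjoint a Ψ‖]

end Aux

/-- bounds for the generalized excitation operators
`b_k(φ) = Σ_{p∈L_k} φ_p c_{p-k}* c_p` and `b_k*(φ) = Σ_{p∈L_k} φ_p c_p* c_{p-k}`
in terms of `⟨Ψ, 𝒩_k Ψ⟩ = Σ_{p∈L_k} ‖b_{k,p} Ψ‖²`. -/
theorem excitation_operator_bounds
    {H : Type*} [NormedAddCommGroup H] [InnerProductSpace ℂ H] [CompleteSpace H]
    (c : (Fin 3 → ℤ) → H →L[ℂ] H)
    (hCAR1 : ∀ p q, c p * c q + c q * c p = 0)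
    (hCAR2 : ∀ p q, c p * adjoint (c q) + adjoint (c q) * c p
        = if p = q then (1 : H →L[ℂ] H) else 0)
    (kF : ℝ) (hkF : 0 < kF)
    (k : Fin 3 → ℤ) (hk : k ≠ 0)
    (Lk : Finset (Fin 3 → ℤ)) (hLk : ∀ p, p ∈ Lk ↔ inLune kF k p)
    (φ : (Fin 3 → ℤ) → ℝ) (Ψ : H) :
    ‖(∑ p ∈ Lk, (φ p : ℂ) • (adjoint (c (p - k)) * c p)) Ψ‖ ^ 2
        ≤ (∑ p ∈ Lk, (φ p) ^ 2) * (∑ p ∈ Lk, ‖(adjoint (c (p - k)) * c p) Ψ‖ ^ 2) ∧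
    ‖(∑ p ∈ Lk, (φ p : ℂ) • (adjoint (c p) * c (p - k))) Ψ‖ ^ 2
        ≤ (∑ p ∈ Lk, (φ p) ^ 2)
            * ((∑ p ∈ Lk, ‖(adjoint (c (p - k)) * c p) Ψ‖ ^ 2) + ‖Ψ‖ ^ 2) := by
  set B : H →L[ℂ] H := ∑ p ∈ Lk, (φ p : ℂ) • (adjoint (c (p - k)) * c p) with hB
  set Bs : H →L[ℂ] H := ∑ p ∈ Lk, (φ p : ℂ) • (adjoint (c p) * c (p - k)) with hBs
  -- Part 1
  have happ : B Ψ = ∑ p ∈ Lk, (φ p : ℂ) • ((adjoint (c (p - k)) * c p) Ψ) := by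
    simp [hB, ContinuousLinearMap.sum_apply]
  have part1 : ‖B Ψ‖ ^ 2
      ≤ (∑ p ∈ Lk, (φ p) ^ 2) * (∑ p ∈ Lk, ‖(adjoint (c (p - k)) * c p) Ψ‖ ^ 2) := by
    rw [happ]; exact cs_part1 Lk φ _
  refine ⟨part1, ?_⟩
  -- Part 2
  have hadj : adjoint B = Bs := by
    rw [← star_eq_adjoint, hB, hBs, star_sum]
    refine Finset.sum_congr rfl fun p _ => ?_
    rw [star_smul, star_mul, star_eq_adjoint, star_eq_adjoint, adjoint_adjoint,
      Complex.star_def, Complex.conj_ofReal]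
  have hop : B * Bs - Bs * B
      = ∑ p ∈ Lk, (((φ p) ^ 2 : ℝ) : ℂ) •
          (adjoint (c (p - k)) * c (p - k) - adjoint (c p) * c p) :=
    sum_expand Lk φ _ _ _ (fun p q => comm_bp c hCAR1 hCAR2 k p q)
  have hnorm : ((‖Bs Ψ‖ ^ 2 : ℝ) : ℂ) - ((‖B Ψ‖ ^ 2 : ℝ) : ℂ)
      = ∑ p ∈ Lk, (((φ p) ^ 2 : ℝ) : ℂ) *
          (((‖c (p - k) Ψ‖ ^ 2 : ℝ) : ℂ) - ((‖c p Ψ‖ ^ 2 : ℝ) : ℂ)) := by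
    have h := congrArg (fun T : H →L[ℂ] H => (inner ℂ Ψ (T Ψ) : ℂ)) hop
    simp only [sub_apply, mul_apply_eq_comp, ContinuousLinearMap.sum_apply, smul_apply,
      inner_sub_right, inner_sum, inner_smul_right] at h
    rw [← hadj, adjoint_inner_right, ← adjoint_inner_left, hadj,
      inner_self_eq_norm_sq_to_K, inner_self_eq_norm_sq_to_K] at h
    push_cast
    push_cast at h
    refine h.trans (Finset.sum_congr rfl fun p _ => ?_)
    rw [adjoint_inner_right, adjoint_inner_right,
      inner_self_eq_norm_sq_to_K, inner_self_eq_norm_sq_to_K]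
    have hco : ∀ r : ℝ, (RCLike.ofReal r : ℂ) = Complex.ofReal r := fun _ => rfl
    simp only [hco]
  have hreal : ‖Bs Ψ‖ ^ 2 - ‖B Ψ‖ ^ 2
      = ∑ p ∈ Lk, (φ p) ^ 2 * (‖c (p - k) Ψ‖ ^ 2 - ‖c p Ψ‖ ^ 2) := by
    exact_mod_cast hnorm
  have hbound : ∀ h, ‖c h Ψ‖ ^ 2 ≤ ‖Ψ‖ ^ 2 := by
    intro h
    refine norm_c_le (c h) ?_ Ψ
    have := hCAR2 h h
    simpa using this
  have hsum : ∑ p ∈ Lk, (φ p) ^ 2 * (‖c (p - k) Ψ‖ ^ 2 - ‖c p Ψ‖ ^ 2)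
      ≤ (∑ p ∈ Lk, (φ p) ^ 2) * ‖Ψ‖ ^ 2 := by
    rw [Finset.sum_mul]
    refine Finset.sum_le_sum fun p _ => ?_
    have h1 := hbound (p - k)
    have h2 : (0 : ℝ) ≤ ‖c p Ψ‖ ^ 2 := sq_nonneg _
    nlinarith [sq_nonneg (φ p)]
  linarith [part1, hreal, hsum]

end
end

section
/- Let n ∈ ℕ and let A, B, Z be n×n complex Hermitian matrices such that A is positive definite, Z is positive semidefinite, B is Hermitian, and A Z = Z A. If both Z − [A,[A,B]] and Z + [A,[A,B]] are positive semidefinite (i.e. ±[A,[A,B]] ≤ Z in the Loewner order), then both (1/4) A⁻¹ Z − [A^{1/2},[A^{1/2},B]] and (1/4) A⁻¹ Z + [A^{1/2},[A^{1/2},B]] are positive semidefinite (i.e. ±[A^{1/2},[A^{1/2},B]] ≤ (1/4) A⁻¹ Z), where A^{1/2} denotes the positive square root of A and [X,Y] = XY − YX. -/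
set_option maxHeartbeats 1000000

noncomputable section

open Matrix MeasureTheory intervalIntegral
open scoped ComplexOrder

/-- The positive square root of a positive semidefinite matrix, as `Matrix.PosSemidef.sqrt`
was defined in Mathlib (Dec 2024); it has since been removed in favour of `CFC.sqrt`. -/
def Matrix.PosSemidef.sqrt {n : Type*} [Fintype n] [DecidableEq n] {𝕜 : Type*} [RCLike 𝕜]
    {A : Matrix n n 𝕜} (hA : A.PosSemidef) : Matrix n n 𝕜 :=
  (hA.1.eigenvectorUnitary : Matrix n n 𝕜) * Matrix.diagonal ((↑) ∘ Real.sqrt ∘ hA.1.eigenvalues) *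
    (star (hA.1.eigenvectorUnitary : Matrix n n 𝕜))

lemma rpow_c_intable {r : ℝ} (hr : -1 < r) (c : ℂ) :
    IntervalIntegrable (fun t : ℝ => c * ((t ^ r : ℝ) : ℂ)) volume 0 1 := by
  have h1 : IntervalIntegrable (fun t : ℝ => (t : ℝ) ^ r) volume 0 1 :=
    intervalIntegrable_rpow' hr
  have h2 : IntervalIntegrable (fun t : ℝ => ((t ^ r : ℝ) : ℂ)) volume 0 1 := by
    rw [intervalIntegrable_iff] at h1 ⊢
    exact h1.ofReal
  exact h2.const_mul c

lemma cauchy_posSemidef {m : ℕ} (s : Fin m → ℝ) (hs : ∀ i, 0 < s i) :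
    (Matrix.of fun i j => ((1 / (s i + s j) : ℝ) : ℂ)).PosSemidef := by
  refine .of_dotProduct_mulVec_nonneg ?_ ?_
  · ext i j
    simp [Matrix.conjTranspose_apply, add_comm]
  · intro x
    have e1 : ∀ i j : Fin m, (starRingEnd ℂ) (x i) * x j * ((1 / (s i + s j) : ℝ) : ℂ)
        = ∫ t in (0:ℝ)..1, (starRingEnd ℂ) (x i) * x j * ((t ^ (s i + s j - 1) : ℝ) : ℂ) := by
      intro i j
      have hint : ∫ t in (0:ℝ)..1, (t : ℝ) ^ (s i + s j - 1) = 1 / (s i + s j) := by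
        rw [integral_rpow (Or.inl (by linarith [hs i, hs j]))]
        simp
        rw [Real.zero_rpow (ne_of_gt (by linarith [hs i, hs j]))]
        ring
      rw [intervalIntegral.integral_const_mul, intervalIntegral.integral_ofReal, hint]
    have key : star x ⬝ᵥ (Matrix.of fun i j => ((1 / (s i + s j) : ℝ) : ℂ)) *ᵥ x
        = ∫ t in (0:ℝ)..1, ∑ i, ∑ j,
            (starRingEnd ℂ) (x i) * x j * ((t ^ (s i + s j - 1) : ℝ) : ℂ) := by
      calc star x ⬝ᵥ (Matrix.of fun i j => ((1 / (s i + s j) : ℝ) : ℂ)) *ᵥ x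
          = ∑ i, ∑ j, (starRingEnd ℂ) (x i) * x j * ((1 / (s i + s j) : ℝ) : ℂ) := by
            simp only [dotProduct, mulVec, Matrix.of_apply, Pi.star_apply, Finset.mul_sum,
              RCLike.star_def]
            exact Finset.sum_congr rfl fun i _ => Finset.sum_congr rfl fun j _ => by ring
        _ = ∑ i, ∑ j, ∫ t in (0:ℝ)..1,
              (starRingEnd ℂ) (x i) * x j * ((t ^ (s i + s j - 1) : ℝ) : ℂ) :=
            Finset.sum_congr rfl fun i _ => Finset.sum_congr rfl fun j _ => e1 i j
        _ = ∑ i, ∫ t in (0:ℝ)..1, ∑ j,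
              (starRingEnd ℂ) (x i) * x j * ((t ^ (s i + s j - 1) : ℝ) : ℂ) :=
            Finset.sum_congr rfl fun i _ =>
              (intervalIntegral.integral_finset_sum
                (f := fun j t => (starRingEnd ℂ) (x i) * x j * ((t ^ (s i + s j - 1) : ℝ) : ℂ))
                fun j _ => rpow_c_intable (by linarith [hs i, hs j]) _).symm
        _ = _ := by
            have hintg : ∀ i : Fin m, IntervalIntegrable
                (fun t : ℝ => ∑ j, (starRingEnd ℂ) (x i) * x j * ((t ^ (s i + s j - 1) : ℝ) : ℂ))
                volume 0 1 := fun i => by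
              rw [← Finset.sum_fn]
              exact IntervalIntegrable.sum Finset.univ
                (f := fun j t => (starRingEnd ℂ) (x i) * x j * ((t ^ (s i + s j - 1) : ℝ) : ℂ))
                fun j _ => rpow_c_intable (by linarith [hs i, hs j]) _
            exact (intervalIntegral.integral_finset_sum
              (f := fun i t => ∑ j, (starRingEnd ℂ) (x i) * x j * ((t ^ (s i + s j - 1) : ℝ) : ℂ))
              fun i _ => hintg i).symm
    rw [key]
    have hcong : ∀ t : ℝ, t ∈ Set.uIoc (0:ℝ) 1 →
        (∑ i, ∑ j, (starRingEnd ℂ) (x i) * x j * ((t ^ (s i + s j - 1) : ℝ) : ℂ))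
        = ((Complex.normSq (∑ i, x i * ((t ^ (s i) : ℝ) : ℂ)) / t : ℝ) : ℂ) := by
      intro t ht
      rw [Set.uIoc_of_le (by norm_num : (0:ℝ) ≤ 1)] at ht
      have ht0 : 0 < t := ht.1
      have hsplit : ∀ i j : Fin m, ((t ^ (s i + s j - 1) : ℝ) : ℂ)
          = ((t ^ (s i) : ℝ) : ℂ) * ((t ^ (s j) : ℝ) : ℂ) * ((t⁻¹ : ℝ) : ℂ) := by
        intro i j
        rw [show s i + s j - 1 = s i + (s j + (-1)) by ring,
          Real.rpow_add ht0, Real.rpow_add ht0, Real.rpow_neg_one]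
        push_cast
        ring
      simp only [hsplit]
      rw [Complex.ofReal_div, Complex.normSq_eq_conj_mul_self, map_sum, Finset.sum_mul_sum]
      rw [Finset.sum_div]
      refine Finset.sum_congr rfl fun i _ => ?_
      rw [Finset.sum_div]
      refine Finset.sum_congr rfl fun j _ => ?_
      simp only [_root_.map_mul, Complex.conj_ofReal]
      field_simp
      rw [mul_assoc, ← Complex.ofReal_mul, one_div_mul_cancel ht0.ne', Complex.ofReal_one, mul_one]
    rw [intervalIntegral.integral_congr_ae (Filter.Eventually.of_forall hcong)]
    rw [intervalIntegral.integral_ofReal]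
    rw [Complex.zero_le_real]
    refine intervalIntegral.integral_nonneg (by norm_num) fun t ht => ?_
    have h1 := Complex.normSq_nonneg (∑ i, x i * ((t ^ (s i) : ℝ) : ℂ))
    have h2 : (0:ℝ) ≤ t := ht.1
    positivity

open scoped MatrixOrder in
lemma hadamard_posSemidef {m : ℕ} {M N : Matrix (Fin m) (Fin m) ℂ}
    (hM : M.PosSemidef) (hN : N.PosSemidef) : (M.hadamard N).PosSemidef := by
  obtain ⟨R, hRh, hRN⟩ : ∃ R : Matrix (Fin m) (Fin m) ℂ, R.IsHermitian ∧ R * R = N :=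
    ⟨CFC.sqrt N, (CFC.sqrt_nonneg N).posSemidef.1, CFC.sqrt_mul_sqrt_self N hN.nonneg⟩
  have hsym : ∀ a b, R a b = (starRingEnd ℂ) (R b a) := fun a b => by
    rw [← hRh.apply a b]; rfl
  have hN' : ∀ i j, N i j = ∑ k, R i k * (starRingEnd ℂ) (R j k) := by
    intro i j
    rw [← hRN, Matrix.mul_apply]
    exact Finset.sum_congr rfl fun k _ => by rw [← hsym k j]
  refine .of_dotProduct_mulVec_nonneg ?_ ?_
  · ext i j
    simp only [conjTranspose_apply, Matrix.hadamard_apply, star_mul']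
    rw [hM.1.apply, hN.1.apply, mul_comm]
  · intro x
    set T : Fin m → Fin m → Fin m → ℂ := fun i j k =>
      (starRingEnd ℂ) (x i) * M i j * x j * R i k * (starRingEnd ℂ) (R j k) with hT
    set w : Fin m → Fin m → ℂ := fun k i => (starRingEnd ℂ) (R i k) * x i with hw
    have hwk : ∀ k, star (w k) ⬝ᵥ M *ᵥ (w k) = ∑ i, ∑ j, T i j k := by
      intro k
      simp only [dotProduct, mulVec, Pi.star_apply, hw, hT, star_mul', RCLike.star_def,
        Complex.conj_conj, Finset.mul_sum]
      exact Finset.sum_congr rfl fun i _ => Finset.sum_congr rfl fun j _ => by ring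
    have hL : star x ⬝ᵥ (M.hadamard N) *ᵥ x = ∑ i, ∑ j, ∑ k, T i j k := by
      simp only [dotProduct, mulVec, Matrix.hadamard_apply, Pi.star_apply, RCLike.star_def,
        Finset.mul_sum]
      refine Finset.sum_congr rfl fun i _ => Finset.sum_congr rfl fun j _ => ?_
      simp only [hN' i j, Finset.sum_mul, Finset.mul_sum, hT]
      exact Finset.sum_congr rfl fun k _ => by ring
    calc star x ⬝ᵥ (M.hadamard N) *ᵥ x = ∑ i, ∑ j, ∑ k, T i j k := hL
      _ = ∑ i, ∑ k, ∑ j, T i j k := Finset.sum_congr rfl fun i _ => Finset.sum_comm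
      _ = ∑ k, ∑ i, ∑ j, T i j k := Finset.sum_comm
      _ = ∑ k, star (w k) ⬝ᵥ M *ᵥ (w k) := Finset.sum_congr rfl fun k _ => (hwk k).symm
      _ ≥ 0 := Finset.sum_nonneg fun k _ => hM.dotProduct_mulVec_nonneg _

lemma aux_sqrt_est (n : ℕ) (A B Z : Matrix (Fin n) (Fin n) ℂ)
    (hA : A.PosDef)
    (hcomm : A * Z = Z * A)
    (hub : (Z - (A * (A * B - B * A) - (A * B - B * A) * A)).PosSemidef) :
    ((1 / 4 : ℂ) • (A⁻¹ * Z)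
        - (hA.posSemidef.sqrt * (hA.posSemidef.sqrt * B - B * hA.posSemidef.sqrt)
            - (hA.posSemidef.sqrt * B - B * hA.posSemidef.sqrt) * hA.posSemidef.sqrt)).PosSemidef := by
  classical
  have h : A.IsHermitian := hA.1
  set U : Matrix (Fin n) (Fin n) ℂ := (h.eigenvectorUnitary : Matrix (Fin n) (Fin n) ℂ) with hUdef
  have hU1 : U * star U = 1 := (Matrix.mem_unitaryGroup_iff).mp h.eigenvectorUnitary.2
  have hU2 : star U * U = 1 := (Matrix.mem_unitaryGroup_iff').mp h.eigenvectorUnitary.2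
  set e : Fin n → ℝ := h.eigenvalues with hedef
  have he : ∀ i, 0 < e i := fun i => hA.eigenvalues_pos i
  set s : Fin n → ℝ := fun i => Real.sqrt (e i) with hsdef
  have hspos : ∀ i, 0 < s i := fun i => Real.sqrt_pos.mpr (he i)
  have hs2 : ∀ i, s i * s i = e i := fun i => Real.mul_self_sqrt (he i).le
  set D : Matrix (Fin n) (Fin n) ℂ := Matrix.diagonal (fun i => (e i : ℂ)) with hDdef
  set Ds : Matrix (Fin n) (Fin n) ℂ := Matrix.diagonal (fun i => (s i : ℂ)) with hDsdef
  set Dinv : Matrix (Fin n) (Fin n) ℂ := Matrix.diagonal (fun i => ((e i : ℂ))⁻¹) with hDinvdef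
  have hspec : A = U * D * star U := by
    have := h.spectral_theorem
    rw [Unitary.conjStarAlgAut_apply] at this
    exact this
  have hΨmul : ∀ X Y : Matrix (Fin n) (Fin n) ℂ,
      (U * X * star U) * (U * Y * star U) = U * (X * Y) * star U := by
    intro X Y
    calc (U * X * star U) * (U * Y * star U)
        = U * X * (star U * U) * (Y * star U) := by simp only [mul_assoc]
      _ = U * (X * Y) * star U := by rw [hU2, mul_one]; simp only [mul_assoc]
  have hΦmul : ∀ X Y : Matrix (Fin n) (Fin n) ℂ,
      (star U * X * U) * (star U * Y * U) = star U * (X * Y) * U := by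
    intro X Y
    calc (star U * X * U) * (star U * Y * U)
        = star U * X * (U * star U) * (Y * U) := by simp only [mul_assoc]
      _ = star U * (X * Y) * U := by rw [hU1, mul_one]; simp only [mul_assoc]
  have hΨΦ : ∀ X : Matrix (Fin n) (Fin n) ℂ, U * (star U * X * U) * star U = X := by
    intro X
    calc U * (star U * X * U) * star U = (U * star U) * X * (U * star U) := by
          simp only [mul_assoc]
      _ = X := by rw [hU1, one_mul, mul_one]
  have hΦsub : ∀ X Y : Matrix (Fin n) (Fin n) ℂ,
      star U * (X - Y) * U = star U * X * U - star U * Y * U := fun X Y => by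
    rw [Matrix.mul_sub, Matrix.sub_mul]
  set B' : Matrix (Fin n) (Fin n) ℂ := star U * B * U with hB'def
  set Z' : Matrix (Fin n) (Fin n) ℂ := star U * Z * U with hZ'def
  have hΦA : star U * A * U = D := by
    rw [hspec]
    calc star U * (U * D * star U) * U = (star U * U) * D * (star U * U) := by
          simp only [mul_assoc]
      _ = D := by rw [hU2, one_mul, mul_one]
  have hDs2 : Ds * Ds = D := by
    rw [hDsdef, hDdef, Matrix.diagonal_mul_diagonal]
    exact congrArg Matrix.diagonal (funext fun i => by exact_mod_cast congrArg Complex.ofReal (hs2 i))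
  have hDsPSD : Ds.PosSemidef := by
    refine Matrix.posSemidef_diagonal_iff.mpr fun i => ?_
    rw [Complex.zero_le_real]
    exact (hspos i).le
  have hS : U * Ds * star U = hA.posSemidef.sqrt := by
    have hP : (U * Ds * star U).PosSemidef := by
      have := hDsPSD.mul_mul_conjTranspose_same U
      rwa [← Matrix.star_eq_conjTranspose] at this
    rfl
  have hDinvD : Dinv * D = 1 := by
    rw [hDinvdef, hDdef, Matrix.diagonal_mul_diagonal, ← Matrix.diagonal_one]
    exact congrArg Matrix.diagonal (funext fun i =>
      inv_mul_cancel₀ (Complex.ofReal_ne_zero.mpr (he i).ne'))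
  have hAinv : A⁻¹ = U * Dinv * star U := by
    refine Matrix.inv_eq_left_inv ?_
    rw [hspec, hΨmul, hDinvD, mul_one, hU1]
  have hDZ : D * Z' = Z' * D := by
    rw [← hΦA, hZ'def, hΦmul, hΦmul, hcomm]
  set C : Matrix (Fin n) (Fin n) ℂ :=
    Matrix.of (fun i j => ((1 / (s i + s j) ^ 2 : ℝ) : ℂ)) with hCdef
  have hCPSD : C.PosSemidef := by
    have hK := cauchy_posSemidef s hspos
    have hCK : C = (Matrix.of fun i j => ((1 / (s i + s j) : ℝ) : ℂ)).hadamard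
        (Matrix.of fun i j => ((1 / (s i + s j) : ℝ) : ℂ)) := by
      ext i j
      simp only [hCdef, Matrix.hadamard_apply, Matrix.of_apply]
      rw [show (1 / (s i + s j) ^ 2 : ℝ) = (1 / (s i + s j)) * (1 / (s i + s j)) by
        rw [sq, one_div, mul_inv]; simp [one_div], Complex.ofReal_mul]
    rw [hCK]
    exact hadamard_posSemidef hK hK
  have hkey : (1 / 4 : ℂ) • (Dinv * Z') - (Ds * (Ds * B' - B' * Ds) - (Ds * B' - B' * Ds) * Ds)
      = C.hadamard (Z' - (D * (D * B' - B' * D) - (D * B' - B' * D) * D)) := by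
    ext i j
    have hZcomm : (e i : ℂ) * Z' i j = Z' i j * (e j : ℂ) := by
      have := congrFun (congrFun hDZ i) j
      simpa [hDdef, Matrix.diagonal_mul, Matrix.mul_diagonal] using this
    simp only [Matrix.sub_apply, Matrix.smul_apply, Matrix.hadamard_apply, Matrix.of_apply,
      Matrix.diagonal_mul, Matrix.mul_diagonal, Matrix.mul_sub, Matrix.sub_mul, hCdef,
      hDdef, hDsdef, hDinvdef, smul_eq_mul]
    have hsum_ne : (s i + s j) ≠ 0 := ne_of_gt (add_pos (hspos i) (hspos j))
    have hreal : (s i - s j) ^ 2 * (s i + s j) ^ 2 = (e i - e j) ^ 2 := by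
      rw [← hs2 i, ← hs2 j]; ring
    have hratio : (1 / (s i + s j) ^ 2 : ℝ) * (e i - e j) ^ 2 = (s i - s j) ^ 2 := by
      rw [← hreal]
      field_simp
    have hratioC : ((1 / (s i + s j) ^ 2 : ℝ) : ℂ) * ((e i : ℂ) - e j) ^ 2
        = ((s i : ℂ) - s j) ^ 2 := by exact_mod_cast hratio
    by_cases hz : Z' i j = 0
    · linear_combination B' i j * hratioC
        + ((1/4 : ℂ) * ((e i : ℂ))⁻¹ - ((1 / (s i + s j) ^ 2 : ℝ) : ℂ)) * hz
    · have heq : e i = e j := by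
        have h2 : ((e i : ℂ) - (e j : ℂ)) * Z' i j = 0 := by
          rw [sub_mul, hZcomm]; ring
        rcases mul_eq_zero.mp h2 with h3 | h3
        · exact_mod_cast sub_eq_zero.mp h3
        · exact absurd h3 hz
      have hseq : s i = s j := by rw [hsdef]; simp [heq]
      have hC4 : ((1 / (s i + s j) ^ 2 : ℝ) : ℂ) = (1/4 : ℂ) * ((e i : ℂ))⁻¹ := by
        have hr : (1 / (s i + s j) ^ 2 : ℝ) = (1/4 : ℝ) * (e i)⁻¹ := by
          rw [← hseq, ← hs2 i]
          rw [show s i + s i = 2 * s i by ring]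
          field_simp
          ring
        rw [hr]
        push_cast
        ring
      linear_combination (-(Z' i j)) * hC4 + B' i j * hratioC
  -- transfer of positivity
  have hΦcommAB : star U * (A * B - B * A) * U = D * B' - B' * D := by
    rw [hΦsub, ← hΦmul A B, ← hΦmul B A, hΦA]
  have hΦcomm : star U * (Z - (A * (A * B - B * A) - (A * B - B * A) * A)) * U
      = Z' - (D * (D * B' - B' * D) - (D * B' - B' * D) * D) := by
    rw [hΦsub, hΦsub, ← hΦmul A (A * B - B * A), ← hΦmul (A * B - B * A) A, hΦcommAB, hΦA,
      ← hZ'def]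
  have hPSDinner : (C.hadamard (Z' - (D * (D * B' - B' * D) - (D * B' - B' * D) * D))).PosSemidef := by
    refine hadamard_posSemidef hCPSD ?_
    rw [← hΦcomm]
    have := hub.conjTranspose_mul_mul_same U
    rwa [← Matrix.star_eq_conjTranspose] at this
  have hZ2 : U * Z' * star U = Z := by rw [hZ'def]; exact hΨΦ Z
  have hB2 : U * B' * star U = B := by rw [hB'def]; exact hΨΦ B
  have hfinal : (1 / 4 : ℂ) • (A⁻¹ * Z)
        - (hA.posSemidef.sqrt * (hA.posSemidef.sqrt * B - B * hA.posSemidef.sqrt)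
            - (hA.posSemidef.sqrt * B - B * hA.posSemidef.sqrt) * hA.posSemidef.sqrt)
      = U * ((1 / 4 : ℂ) • (Dinv * Z')
          - (Ds * (Ds * B' - B' * Ds) - (Ds * B' - B' * Ds) * Ds)) * star U := by
    have cancel1 : ∀ X : Matrix (Fin n) (Fin n) ℂ, U * (star U * X) = X := fun X => by
      rw [← mul_assoc, hU1, one_mul]
    have cancel2 : ∀ X : Matrix (Fin n) (Fin n) ℂ, star U * (U * X) = X := fun X => by
      rw [← mul_assoc, hU2, one_mul]
    rw [hAinv, ← hS, ← hZ2, ← hB2]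
    simp only [Matrix.mul_sub, Matrix.sub_mul, Matrix.mul_smul, Matrix.smul_mul,
      mul_assoc, cancel1, cancel2]
  rw [hfinal, hkey]
  have := hPSDinner.mul_mul_conjTranspose_same U
  rwa [← Matrix.star_eq_conjTranspose] at this

/-- the commutator-root estimate
`±[A,[A,B]] ≤ Z  ⟹  ±[√A,[√A,B]] ≤ (1/4) A⁻¹ Z`. -/
theorem commutator_sqrt_estimate
    (n : ℕ) (A B Z : Matrix (Fin n) (Fin n) ℂ)
    (hA : A.PosDef) (hB : B.IsHermitian) (hZ : Z.PosSemidef)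
    (hcomm : A * Z = Z * A)
    (hub : (Z - (A * (A * B - B * A) - (A * B - B * A) * A)).PosSemidef)
    (hlb : (Z + (A * (A * B - B * A) - (A * B - B * A) * A)).PosSemidef) :
    ((1 / 4 : ℂ) • (A⁻¹ * Z)
        - (hA.posSemidef.sqrt * (hA.posSemidef.sqrt * B - B * hA.posSemidef.sqrt)
            - (hA.posSemidef.sqrt * B - B * hA.posSemidef.sqrt) * hA.posSemidef.sqrt)).PosSemidef
      ∧
    ((1 / 4 : ℂ) • (A⁻¹ * Z)
        + (hA.posSemidef.sqrt * (hA.posSemidef.sqrt * B - B * hA.posSemidef.sqrt)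
            - (hA.posSemidef.sqrt * B - B * hA.posSemidef.sqrt) * hA.posSemidef.sqrt)).PosSemidef := by
  constructor
  · exact aux_sqrt_est n A B Z hA hcomm hub
  · have h1 : (Z - (A * (A * (-B) - (-B) * A) - (A * (-B) - (-B) * A) * A)).PosSemidef := by
      have heq : Z - (A * (A * (-B) - (-B) * A) - (A * (-B) - (-B) * A) * A)
          = Z + (A * (A * B - B * A) - (A * B - B * A) * A) := by noncomm_ring
      rw [heq]; exact hlb
    have h2 := aux_sqrt_est n A (-B) Z hA hcomm h1
    have hXY : hA.posSemidef.sqrt * (hA.posSemidef.sqrt * (-B) - (-B) * hA.posSemidef.sqrt)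
          - (hA.posSemidef.sqrt * (-B) - (-B) * hA.posSemidef.sqrt) * hA.posSemidef.sqrt
        = -(hA.posSemidef.sqrt * (hA.posSemidef.sqrt * B - B * hA.posSemidef.sqrt)
            - (hA.posSemidef.sqrt * B - B * hA.posSemidef.sqrt) * hA.posSemidef.sqrt) := by
      noncomm_ring
    rw [hXY, sub_neg_eq_add] at h2
    exact h2

end
end
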